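/- arXiv:2303.06882 — 6 statements merged into one kernel-verified Lean document; each statement's English description precedes it below -/
import Mathlib

section
/- The operator norm of T equals the essential supremum of w: ‖T‖ = ‖w‖_∞. -/
set_option maxHeartbeats 1000000

open MeasureTheory Filter Set ENNReal NNReal

local notation "mu0" => MeasureTheory.volume.restrict (Set.Ioi (0:ℝ))

/-- For `1 ≤ p < ∞`, `a > 0`, and `w` a measurable essentially bounded
function on `(0,∞)`, the bounded operator `T` on `L^p(0,∞)` given by
`(Tx)(t) = w(t)·x(t+a)` has operator norm `‖T‖ = ‖w‖_∞`. -/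
theorem stmt0 (p : ENNReal) [Fact (1 ≤ p)] (hp : p ≠ ⊤) (a : ℝ) (ha : 0 < a)
    (w : ℝ → ℂ)
    (hw : AEStronglyMeasurable w (volume.restrict (Set.Ioi (0:ℝ))))
    (hwbdd : eLpNormEssSup w (volume.restrict (Set.Ioi (0:ℝ))) ≠ ⊤)
    (T : Lp ℂ p (volume.restrict (Set.Ioi (0:ℝ))) →L[ℂ]
         Lp ℂ p (volume.restrict (Set.Ioi (0:ℝ))))
    (hT : ∀ x : Lp ℂ p (volume.restrict (Set.Ioi (0:ℝ))),
      (T x : ℝ → ℂ) =ᵐ[volume.restrict (Set.Ioi (0:ℝ))] fun t => w t * x (t + a)) :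
    ‖T‖ = (eLpNormEssSup w (volume.restrict (Set.Ioi (0:ℝ)))).toReal := by
  have hμ : (mu0) = volume.restrict (Set.Ioi (0:ℝ)) := rfl
  set M := eLpNormEssSup w (mu0) with hM
  have hp0 : p ≠ 0 := (lt_of_lt_of_le zero_lt_one (Fact.out : 1 ≤ p)).ne'
  have hptR : 0 < p.toReal := ENNReal.toReal_pos hp0 hp
  -- the shift map is measure preserving from (mu0) to volume.restrict (Ioi a)
  have hpre : (fun t : ℝ => t + a) ⁻¹' Set.Ioi a = Set.Ioi 0 := by
    ext t; simp [Set.mem_Ioi]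
  have hmp : MeasurePreserving (fun t : ℝ => t + a) (mu0) (volume.restrict (Set.Ioi a)) := by
    have := (measurePreserving_add_right volume a).restrict_preimage
      (measurableSet_Ioi (a := a))
    rwa [hpre] at this
  have hres : volume.restrict (Set.Ioi a) ≤ (mu0) :=
    Measure.restrict_mono (Set.Ioi_subset_Ioi ha.le) le_rfl
  -- upper bound
  have hub : ‖T‖ ≤ M.toReal := by
    apply ContinuousLinearMap.opNorm_le_bound T ENNReal.toReal_nonneg
    intro x
    have hxm : AEStronglyMeasurable (fun t => x (t + a)) (mu0) :=
      ((Lp.aestronglyMeasurable x).mono_measure hres).comp_measurePreserving hmp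
    have key : eLpNorm (fun t => w t * x (t + a)) p (mu0) ≤ M * eLpNorm (⇑x) p (mu0) := by
      have h1 : eLpNorm (fun t => w t * x (t + a)) p (mu0)
          ≤ eLpNorm w ⊤ (mu0) * eLpNorm (fun t => x (t + a)) p (mu0) := by
        simpa [smul_eq_mul, Pi.mul_def] using eLpNorm_smul_le_eLpNorm_top_mul_eLpNorm p hxm w
      have h2 : eLpNorm (fun t => x (t + a)) p (mu0) = eLpNorm (⇑x) p (volume.restrict (Set.Ioi a)) :=
        eLpNorm_comp_measurePreserving ((Lp.aestronglyMeasurable x).mono_measure hres) hmp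
      have h3 : eLpNorm (⇑x) p (volume.restrict (Set.Ioi a)) ≤ eLpNorm (⇑x) p (mu0) :=
        eLpNorm_mono_measure _ hres
      calc eLpNorm (fun t => w t * x (t + a)) p (mu0)
          ≤ eLpNorm w ⊤ (mu0) * eLpNorm (fun t => x (t + a)) p (mu0) := h1
        _ = M * eLpNorm (⇑x) p (volume.restrict (Set.Ioi a)) := by
            rw [eLpNorm_exponent_top, h2]
        _ ≤ M * eLpNorm (⇑x) p (mu0) := by gcongr
    have hTx : eLpNorm (⇑(T x)) p (mu0) = eLpNorm (fun t => w t * x (t + a)) p (mu0) :=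
      eLpNorm_congr_ae (hT x)
    rw [Lp.norm_def, Lp.norm_def, hTx, ← ENNReal.toReal_mul]
    exact ENNReal.toReal_mono (ENNReal.mul_ne_top hwbdd (Lp.eLpNorm_ne_top x)) key
  -- lower bound
  have hlb : M.toReal ≤ ‖T‖ := by
    have : M ≤ ENNReal.ofReal ‖T‖ := by
      apply ENNReal.le_of_forall_nnreal_lt
      intro r hr
      -- the set where ‖w‖ > r has positive measure
      set w' := hw.mk w with hw'
      have hww' : w =ᵐ[(mu0)] w' := hw.ae_eq_mk
      have hMw' : eLpNormEssSup w' (mu0) = M := (eLpNormEssSup_congr_ae hww').symm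
      set S := {t : ℝ | (r : ℝ≥0∞) < (‖w' t‖₊ : ℝ≥0∞)} ∩ Set.Ioi 0 with hS
      have hAm : MeasurableSet {t : ℝ | (r : ℝ≥0∞) < (‖w' t‖₊ : ℝ≥0∞)} :=
        measurableSet_lt measurable_const
          (hw.stronglyMeasurable_mk.measurable.nnnorm.coe_nnreal_ennreal)
      have hSm : MeasurableSet S := hAm.inter measurableSet_Ioi
      have hSpos : 0 < (mu0) S := by
        rcases (zero_le : 0 ≤ (mu0) S).eq_or_lt with h | h
        · exfalso
          have hS0 : (mu0) {t : ℝ | (r : ℝ≥0∞) < (‖w' t‖₊ : ℝ≥0∞)} = 0 := by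
            have h2 := h.symm
            rw [hS, Measure.restrict_apply hSm, Set.inter_assoc, Set.inter_self] at h2
            rw [Measure.restrict_apply hAm]
            exact h2
          have hae : ∀ᵐ t ∂(mu0), (‖w' t‖₊ : ℝ≥0∞) ≤ r := by
            rw [ae_iff]
            simpa [not_le] using hS0
          have : eLpNormEssSup w' (mu0) ≤ r := essSup_le_of_ae_le _ hae
          rw [hMw'] at this
          exact absurd (lt_of_lt_of_le hr this) (lt_irrefl _)
        · exact h
      -- choose a finite positive measure subset
      obtain ⟨E, hEm, hES, hEpos, hEfin⟩ :=
        MeasureTheory.Measure.exists_subset_measure_lt_top hSm hSpos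
      have hEIoi : E ⊆ Set.Ioi (0:ℝ) := fun t ht => (hES ht).2
      -- shifted set B = E + a
      set B := (fun t : ℝ => t - a) ⁻¹' E with hB
      have hBm : MeasurableSet B := (measurable_sub_const a) hEm
      have hBIoi : B ⊆ Set.Ioi (0:ℝ) := by
        intro s hs
        have : s - a ∈ E := hs
        have h0 : 0 < s - a := hEIoi this
        simp only [Set.mem_Ioi]; linarith
      have hvolB : volume B = volume E :=
        (measurePreserving_sub_right volume a).measure_preimage hEm.nullMeasurableSet
      have hμB : (mu0) B = volume E := by
        rw [hμ, Measure.restrict_apply hBm, Set.inter_eq_self_of_subset_left hBIoi, hvolB]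
      have hμE : (mu0) E = volume E := by
        rw [hμ, Measure.restrict_apply hEm, Set.inter_eq_self_of_subset_left hEIoi]
      have hμB_ne : (mu0) B ≠ ∞ := by rw [hμB, ← hμE]; exact hEfin.ne
      -- the test function
      set x : Lp ℂ p (mu0) := indicatorConstLp p hBm hμB_ne (1:ℂ) with hx
      have hxnorm : ‖x‖ = (volume E).toReal ^ (1 / p.toReal) := by
        rw [hx, norm_indicatorConstLp hp0 hp, measureReal_def, hμB]
        simp
      have hxnorm_pos : 0 < ‖x‖ := by
        rw [hxnorm]
        apply Real.rpow_pos_of_pos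
        rw [ENNReal.toReal_pos_iff, ← hμE]
        exact ⟨hEpos, hEfin⟩
      -- identify T x a.e. with E.indicator w
      have hxcoe : (⇑x) =ᵐ[(mu0)] B.indicator (fun _ => (1:ℂ)) := indicatorConstLp_coeFn
      have hxcoe' : (⇑x) =ᵐ[volume.restrict (Set.Ioi a)] B.indicator (fun _ => (1:ℂ)) :=
        (Measure.absolutelyContinuous_of_le hres).ae_le hxcoe
      have hshift : (fun t => x (t + a)) =ᵐ[(mu0)]
          (fun t => B.indicator (fun _ => (1:ℂ)) (t + a)) := by
        have := hmp.quasiMeasurePreserving.ae_eq_comp hxcoe'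
        simpa [Function.comp_def] using this
      have hind : ∀ t : ℝ, B.indicator (fun _ => (1:ℂ)) (t + a) =
          E.indicator (fun _ => (1:ℂ)) t := by
        intro t
        have : t + a ∈ B ↔ t ∈ E := by
          simp [hB, Set.mem_preimage]
        by_cases h : t ∈ E
        · rw [Set.indicator_of_mem (this.mpr h), Set.indicator_of_mem h]
        · rw [Set.indicator_of_notMem (fun hc => h (this.mp hc)), Set.indicator_of_notMem h]
      have hTxae : (⇑(T x)) =ᵐ[(mu0)] fun t => w t * E.indicator (fun _ => (1:ℂ)) t := by
        refine (hT x).trans ?_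
        filter_upwards [hshift] with t ht
        rw [ht, hind t]
      -- lower bound on eLpNorm of T x
      have hlow : eLpNorm (E.indicator (fun _ => ((r : ℝ) : ℂ))) p (mu0) ≤ eLpNorm (⇑(T x)) p (mu0) := by
        apply eLpNorm_mono_ae
        filter_upwards [hTxae, hww'] with t ht htw
        rw [ht]
        by_cases h : t ∈ E
        · rw [Set.indicator_of_mem h, Set.indicator_of_mem h]
          have hrw : (r : ℝ) ≤ ‖w' t‖ := by
            have := (hES h).1
            have : (r : ℝ≥0∞) ≤ ‖w' t‖₊ := this.le
            exact_mod_cast this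
          rw [htw]
          simp only [mul_one]
          calc ‖((r:ℝ):ℂ)‖ = (r : ℝ) := by
                simp [Complex.norm_real]
            _ ≤ ‖w' t‖ := hrw
            _ = ‖w' t‖ := rfl
        · rw [Set.indicator_of_notMem h, Set.indicator_of_notMem h]
          simp
      have hconst : eLpNorm (E.indicator (fun _ => ((r : ℝ) : ℂ))) p (mu0) =
          ‖((r:ℝ):ℂ)‖₊ * ((mu0) E) ^ (1 / p.toReal) :=
        eLpNorm_indicator_const hEm hp0 hp
      -- put together
      have hTxnorm : (r : ℝ) * ‖x‖ ≤ ‖T x‖ := by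
        rw [hxnorm, Lp.norm_def]
        have h1 : ((‖((r:ℝ):ℂ)‖₊ : ℝ≥0∞) * ((mu0) E) ^ (1 / p.toReal)).toReal
            ≤ (eLpNorm (⇑(T x)) p (mu0)).toReal := by
          apply ENNReal.toReal_mono (Lp.eLpNorm_ne_top (T x))
          rw [← hconst]; exact hlow
        calc (r : ℝ) * (volume E).toReal ^ (1 / p.toReal)
            = ((‖((r:ℝ):ℂ)‖₊ : ℝ≥0∞) * ((mu0) E) ^ (1 / p.toReal)).toReal := by
              rw [ENNReal.toReal_mul, ← ENNReal.toReal_rpow, hμE]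
              congr 1
              simp [Complex.norm_real]
          _ ≤ (eLpNorm (⇑(T x)) p (mu0)).toReal := h1
      have hle : (r : ℝ) * ‖x‖ ≤ ‖T‖ * ‖x‖ := hTxnorm.trans (T.le_opNorm x)
      have : (r : ℝ) ≤ ‖T‖ := le_of_mul_le_mul_right (by linarith [hle]) hxnorm_pos
      calc (r : ℝ≥0∞) = ENNReal.ofReal (r : ℝ) := by simp
        _ ≤ ENNReal.ofReal ‖T‖ := ENNReal.ofReal_le_ofReal this
    calc M.toReal ≤ (ENNReal.ofReal ‖T‖).toReal := ENNReal.toReal_mono ENNReal.ofReal_ne_top this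
      _ = ‖T‖ := ENNReal.toReal_ofReal (norm_nonneg T)
  linarith
end

section
/- The operator T is topologically transitive (equivalently, hypercyclic): for any nonempty open sets U, V ⊆ L^p(0,∞) there exists n ∈ ℕ with T^n(U) ∩ V ≠ ∅. -/
open MeasureTheory Filter Set

section Stmt1Aux

lemma stmt1_ae_comp_shift {P : ℝ → Prop} (h : ∀ᵐ t ∂(volume : Measure ℝ), P t) (c : ℝ) :
    ∀ᵐ t ∂(volume : Measure ℝ), P (t + c) := by
  apply ae_of_ae_map (measurable_add_const c).aemeasurable
  rwa [(measurePreserving_add_right volume c).map_eq]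

lemma stmt1_ae_shift_fwd {Q : ℝ → Prop}
    (h : ∀ᵐ t ∂(volume.restrict (Set.Ioi (0:ℝ))), Q t) {c : ℝ} (hc : 0 ≤ c) :
    ∀ᵐ t ∂(volume.restrict (Set.Ioi (0:ℝ))), Q (t + c) := by
  rw [ae_restrict_iff' measurableSet_Ioi] at h ⊢
  filter_upwards [stmt1_ae_comp_shift h c] with t h1 h2
  exact h1 (by simp only [mem_Ioi] at h2 ⊢; linarith)

lemma stmt1_ae_shift_bwd {Q : ℝ → Prop}
    (h : ∀ᵐ t ∂(volume.restrict (Set.Ioi (0:ℝ))), Q t) (c : ℝ) :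
    ∀ᵐ t ∂(volume.restrict (Set.Ioi (0:ℝ))), 0 < t - c → Q (t - c) := by
  have h0 : ∀ᵐ t ∂(volume : Measure ℝ), t ∈ Set.Ioi (0:ℝ) → Q t :=
    (ae_restrict_iff' measurableSet_Ioi).1 h
  have h1 := stmt1_ae_comp_shift h0 (-c)
  refine ae_restrict_of_ae (h1.mono fun t ht h2 => ?_)
  rw [sub_eq_add_neg] at h2 ⊢
  exact ht (by simpa [mem_Ioi] using h2)

lemma stmt1_iInter_Ioi_nat : (⋂ n : ℕ, Set.Ioi ((n:ℝ))) = ∅ := by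
  ext t
  simp only [mem_iInter, mem_Ioi, mem_empty_iff_false, iff_false, not_forall, not_lt]
  obtain ⟨n, hn⟩ := exists_nat_gt t
  exact ⟨n, hn.le⟩

lemma stmt1_tail_tendsto {p : ENNReal} (hp0 : p ≠ 0) (hp : p ≠ ⊤) {f : ℝ → ℂ}
    (hf : MemLp f p (volume.restrict (Set.Ioi (0:ℝ)))) :
    Tendsto (fun n : ℕ => eLpNorm f p (volume.restrict (Set.Ioi ((n:ℝ))))) atTop (nhds 0) := by
  set μ := volume.restrict (Set.Ioi (0:ℝ)) with hμ
  have hτ : 0 < p.toReal := ENNReal.toReal_pos hp0 hp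
  set h : ℝ → ENNReal := fun t => (‖f t‖₊ : ENNReal) ^ p.toReal with hh
  set ν := μ.withDensity h with hν
  have hint : ∫⁻ t, h t ∂μ < ⊤ := by
    have h1 := hf.eLpNorm_lt_top
    rw [eLpNorm_eq_lintegral_rpow_enorm_toReal hp0 hp] at h1
    rwa [ENNReal.rpow_lt_top_iff_of_pos (by positivity : (0:ℝ) < 1 / p.toReal)] at h1
  have hres : ∀ n : ℕ, μ.restrict (Set.Ioi ((n:ℝ))) = volume.restrict (Set.Ioi ((n:ℝ))) := by
    intro n
    rw [hμ, Measure.restrict_restrict measurableSet_Ioi,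
      Set.inter_eq_left.2 (Set.Ioi_subset_Ioi (Nat.cast_nonneg n))]
  have hkey : ∀ n : ℕ, eLpNorm f p (volume.restrict (Set.Ioi ((n:ℝ))))
      = (ν (Set.Ioi ((n:ℝ)))) ^ (1 / p.toReal) := by
    intro n
    rw [← hres n, eLpNorm_eq_lintegral_rpow_enorm_toReal hp0 hp, hν,
      withDensity_apply _ measurableSet_Ioi]
    rfl
  have hten : Tendsto (fun n : ℕ => ν (Set.Ioi ((n:ℝ)))) atTop (nhds 0) := by
    have h2 : Tendsto (fun n : ℕ => ν (Set.Ioi ((n:ℝ)))) atTop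
        (nhds (ν (⋂ n : ℕ, Set.Ioi ((n:ℝ))))) := by
      refine tendsto_measure_iInter_atTop (fun n => measurableSet_Ioi.nullMeasurableSet)
        (fun i j hij => Set.Ioi_subset_Ioi (by exact_mod_cast hij)) ⟨0, ?_⟩
      rw [hν, withDensity_apply _ measurableSet_Ioi]
      exact ((setLIntegral_le_lintegral _ _).trans_lt hint).ne
    rwa [stmt1_iInter_Ioi_nat, measure_empty] at h2
  have hcont := (ENNReal.continuous_rpow_const (y := 1 / p.toReal)).tendsto 0
  have hfin := hcont.comp hten
  rw [ENNReal.zero_rpow_of_pos (by positivity)] at hfin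
  exact Tendsto.congr (fun n => (hkey n).symm) hfin

lemma stmt1_iterate {p : ENNReal} [Fact (1 ≤ p)] {a : ℝ} (ha : 0 ≤ a) (W : ℝ → ℂ)
    (T : Lp ℂ p (volume.restrict (Set.Ioi (0:ℝ))) →L[ℂ] Lp ℂ p (volume.restrict (Set.Ioi (0:ℝ))))
    (hTW : ∀ z : Lp ℂ p (volume.restrict (Set.Ioi (0:ℝ))),
      ((T z : ℝ → ℂ)) =ᵐ[volume.restrict (Set.Ioi (0:ℝ))] fun t => W t * z (t + a))
    (n : ℕ) (z : Lp ℂ p (volume.restrict (Set.Ioi (0:ℝ)))) :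
    (((T ^ n) z : ℝ → ℂ)) =ᵐ[volume.restrict (Set.Ioi (0:ℝ))]
      fun t => (∏ i ∈ Finset.range n, W (t + (i:ℝ) * a)) * z (t + (n:ℝ) * a) := by
  induction n generalizing z with
  | zero =>
    simp only [pow_zero, ContinuousLinearMap.one_apply, Finset.range_zero,
      Finset.prod_empty, Nat.cast_zero, zero_mul, add_zero, one_mul]
    exact Filter.EventuallyEq.rfl
  | succ n ih =>
    have h1 : (T ^ (n+1)) z = (T ^ n) (T z) := by
      rw [pow_succ, ContinuousLinearMap.mul_apply]
    rw [h1]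
    have h3 : ∀ᵐ t ∂(volume.restrict (Set.Ioi (0:ℝ))),
        (T z : ℝ → ℂ) (t + (n:ℝ)*a) = W (t + (n:ℝ)*a) * (z : ℝ → ℂ) ((t + (n:ℝ)*a) + a) :=
      stmt1_ae_shift_fwd (hTW z) (by positivity)
    filter_upwards [ih (T z), h3] with t ht2 ht3
    rw [ht2, ht3, Finset.prod_range_succ]
    have harg : t + (n:ℝ)*a + a = t + ((n+1:ℕ):ℝ)*a := by push_cast; ring
    rw [harg]; ring

end Stmt1Aux

/-- with `|w(t)| ≥ m > 1` and `w` bounded, the bounded operator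
`(Tx)(t) = w(t)x(t+a)` on `L^p(0,∞)` is topologically transitive (hypercyclic):
for any nonempty open `U, V` there is `n` with `T^n(U) ∩ V ≠ ∅`. -/
theorem stmt1 (p : ENNReal) [Fact (1 ≤ p)] (hp : p ≠ ⊤) (a : ℝ) (ha : 0 < a)
    (w : ℝ → ℂ) (m C : ℝ) (hm : 1 < m) (hwm : ∀ t : ℝ, 0 < t → m ≤ ‖w t‖)
    (hwC : ∀ t : ℝ, 0 < t → ‖w t‖ ≤ C)
    (hw : AEStronglyMeasurable w (volume.restrict (Set.Ioi (0:ℝ))))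
    (T : Lp ℂ p (volume.restrict (Set.Ioi (0:ℝ))) →L[ℂ]
         Lp ℂ p (volume.restrict (Set.Ioi (0:ℝ))))
    (hT : ∀ x : Lp ℂ p (volume.restrict (Set.Ioi (0:ℝ))),
      (T x : ℝ → ℂ) =ᵐ[volume.restrict (Set.Ioi (0:ℝ))] fun t => w t * x (t + a)) :
    ∀ U V : Set (Lp ℂ p (volume.restrict (Set.Ioi (0:ℝ)))),
      IsOpen U → IsOpen V → U.Nonempty → V.Nonempty →
        ∃ n : ℕ, ((T ^ n) '' U ∩ V).Nonempty := by
  rintro U V hU hV ⟨x, hxU⟩ ⟨y, hyV⟩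
  have hp1 : 1 ≤ p := Fact.out
  have hp0 : p ≠ 0 := (zero_lt_one.trans_le hp1).ne'
  have hm0 : (0:ℝ) < m := by linarith
  obtain ⟨εU, hεU, hBU⟩ := Metric.isOpen_iff.1 hU x hxU
  obtain ⟨εV, hεV, hBV⟩ := Metric.isOpen_iff.1 hV y hyV
  set δ : ℝ := min εU εV / 4 with hδdef
  have hδ : 0 < δ := div_pos (lt_min hεU hεV) (by norm_num)
  -- measurable version of w
  set W : ℝ → ℂ := hw.mk w with hWdef
  have hWs : StronglyMeasurable W := hw.stronglyMeasurable_mk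
  have hWw : w =ᵐ[volume.restrict (Set.Ioi (0:ℝ))] W := hw.ae_eq_mk
  have hmem0 : ∀ᵐ t ∂(volume.restrict (Set.Ioi (0:ℝ))), t ∈ Set.Ioi (0:ℝ) :=
    ae_restrict_mem measurableSet_Ioi
  have hWm : ∀ᵐ t ∂(volume.restrict (Set.Ioi (0:ℝ))), m ≤ ‖W t‖ := by
    filter_upwards [hWw, hmem0] with t h1 h2
    rw [← h1]; exact hwm t h2
  have hTW : ∀ z : Lp ℂ p (volume.restrict (Set.Ioi (0:ℝ))),
      ((T z : ℝ → ℂ)) =ᵐ[volume.restrict (Set.Ioi (0:ℝ))] fun t => W t * z (t + a) := by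
    intro z
    refine (hT z).trans ?_
    filter_upwards [hWw] with t h1
    rw [h1]
  have hTn := stmt1_iterate ha.le W T hTW
  -- measurable representatives of x, y
  set FX : ℝ → ℂ := (Lp.aestronglyMeasurable x).mk _ with hFXdef
  have hFXs : StronglyMeasurable FX := (Lp.aestronglyMeasurable x).stronglyMeasurable_mk
  have hFXe : (x : ℝ → ℂ) =ᵐ[volume.restrict (Set.Ioi (0:ℝ))] FX :=
    (Lp.aestronglyMeasurable x).ae_eq_mk
  have hFXm : MemLp FX p (volume.restrict (Set.Ioi (0:ℝ))) := (Lp.memLp x).ae_eq hFXe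
  set FY : ℝ → ℂ := (Lp.aestronglyMeasurable y).mk _ with hFYdef
  have hFYs : StronglyMeasurable FY := (Lp.aestronglyMeasurable y).stronglyMeasurable_mk
  have hFYe : (y : ℝ → ℂ) =ᵐ[volume.restrict (Set.Ioi (0:ℝ))] FY :=
    (Lp.aestronglyMeasurable y).ae_eq_mk
  have hFYm : MemLp FY p (volume.restrict (Set.Ioi (0:ℝ))) := (Lp.memLp y).ae_eq hFYe
  -- choose the truncation level M
  have hδ' : (0:ENNReal) < ENNReal.ofReal δ := ENNReal.ofReal_pos.2 hδ
  obtain ⟨M, hM1, hM2⟩ := (((stmt1_tail_tendsto hp0 hp hFXm).eventually_lt_const hδ').and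
    ((stmt1_tail_tendsto hp0 hp hFYm).eventually_lt_const hδ')).exists
  -- truncations
  set x'f : ℝ → ℂ := (Set.Ioc (0:ℝ) (M:ℝ)).indicator FX with hx'fdef
  have hx'mem : MemLp x'f p (volume.restrict (Set.Ioi (0:ℝ))) :=
    hFXm.indicator measurableSet_Ioc
  set x' := hx'mem.toLp x'f with hx'def
  set y'f : ℝ → ℂ := (Set.Ioc (0:ℝ) (M:ℝ)).indicator FY with hy'fdef
  have hy'mem : MemLp y'f p (volume.restrict (Set.Ioi (0:ℝ))) :=
    hFYm.indicator measurableSet_Ioc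
  set y' := hy'mem.toLp y'f with hy'def
  have hsetM : (Set.Ioc (0:ℝ) (M:ℝ))ᶜ ∩ Set.Ioi (0:ℝ) = Set.Ioi ((M:ℝ)) := by
    ext t
    simp only [mem_inter_iff, mem_compl_iff, mem_Ioc, mem_Ioi, not_and, not_le]
    constructor
    · rintro ⟨h1, h2⟩; exact h1 h2
    · intro h; exact ⟨fun _ => h, lt_of_le_of_lt (Nat.cast_nonneg M) h⟩
  -- distance estimates for truncations
  have htrunc : ∀ (F : ℝ → ℂ) (hFm : MemLp F p (volume.restrict (Set.Ioi (0:ℝ))))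
      (hWF : eLpNorm F p (volume.restrict (Set.Ioi ((M:ℝ)))) < ENNReal.ofReal δ)
      (v : Lp ℂ p (volume.restrict (Set.Ioi (0:ℝ))))
      (hv : (v : ℝ → ℂ) =ᵐ[volume.restrict (Set.Ioi (0:ℝ))] F),
      ‖(hFm.indicator measurableSet_Ioc :
          MemLp ((Set.Ioc (0:ℝ) (M:ℝ)).indicator F) p _).toLp _ - v‖ < δ := by
    intro F hFm hWF v hv
    set v' := (hFm.indicator measurableSet_Ioc :
      MemLp ((Set.Ioc (0:ℝ) (M:ℝ)).indicator F) p _).toLp _ with hv'def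
    have hcoe : ⇑(v' - v) =ᵐ[volume.restrict (Set.Ioi (0:ℝ))]
        fun t => (Set.Ioc (0:ℝ) (M:ℝ)).indicator F t - F t := by
      filter_upwards [Lp.coeFn_sub v' v,
        (hFm.indicator measurableSet_Ioc :
          MemLp ((Set.Ioc (0:ℝ) (M:ℝ)).indicator F) p _).coeFn_toLp, hv] with t h1 h2 h3
      rw [h1, Pi.sub_apply, h2, h3]
    have hsub : ∀ t, (Set.Ioc (0:ℝ) (M:ℝ)).indicator F t - F t
        = -(((Set.Ioc (0:ℝ) (M:ℝ))ᶜ).indicator F t) := by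
      intro t
      by_cases hmem : t ∈ Set.Ioc (0:ℝ) (M:ℝ) <;>
        simp [Set.indicator_apply, hmem]
    have hb : eLpNorm (fun t => (Set.Ioc (0:ℝ) (M:ℝ)).indicator F t - F t) p
        (volume.restrict (Set.Ioi (0:ℝ)))
        ≤ eLpNorm (((Set.Ioc (0:ℝ) (M:ℝ))ᶜ).indicator F) p (volume.restrict (Set.Ioi (0:ℝ))) :=
      eLpNorm_mono_ae (Eventually.of_forall fun t => by rw [hsub t, norm_neg])
    have hO : eLpNorm (((Set.Ioc (0:ℝ) (M:ℝ))ᶜ).indicator F) p (volume.restrict (Set.Ioi (0:ℝ)))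
        = eLpNorm F p (volume.restrict (Set.Ioi ((M:ℝ)))) := by
      rw [eLpNorm_indicator_eq_eLpNorm_restrict measurableSet_Ioc.compl,
        Measure.restrict_restrict measurableSet_Ioc.compl, hsetM]
    rw [Lp.norm_def, eLpNorm_congr_ae hcoe]
    exact ENNReal.toReal_lt_of_lt_ofReal ((hb.trans_eq hO).trans_lt hWF)
  have hdx : ‖x' - x‖ < δ := htrunc FX hFXm hM1 x hFXe
  have hdy : ‖y' - y‖ < δ := htrunc FY hFYm hM2 y hFYe
  -- choose n
  set K : ℝ := (eLpNorm y'f p (volume.restrict (Set.Ioi (0:ℝ)))).toReal with hKdef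
  have hKfin : eLpNorm y'f p (volume.restrict (Set.Ioi (0:ℝ))) < ⊤ := hy'mem.eLpNorm_lt_top
  have hK0 : 0 ≤ K := ENNReal.toReal_nonneg
  have htend : Tendsto (fun n:ℕ => (1/m)^n * (K+1)) atTop (nhds 0) := by
    have h1 : Tendsto (fun n:ℕ => (1/m)^n) atTop (nhds 0) :=
      tendsto_pow_atTop_nhds_zero_of_lt_one (by positivity)
        (by rw [div_lt_one hm0]; exact hm)
    simpa using h1.mul_const (K+1)
  have hev1 : ∀ᶠ n:ℕ in atTop, (1/m)^n * (K+1) < δ := htend.eventually_lt_const hδ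
  have hev2 : ∀ᶠ n:ℕ in atTop, (M:ℝ) ≤ (n:ℝ)*a :=
    (tendsto_natCast_atTop_atTop.atTop_mul_const ha).eventually_ge_atTop ((M:ℝ))
  obtain ⟨n, hn1, hn2⟩ := (hev1.and hev2).exists
  have hna0 : (0:ℝ) ≤ (n:ℝ)*a := le_trans (Nat.cast_nonneg M) hn2
  -- the "inverse shift" function g
  set g : ℝ → ℂ := (Set.Ioi ((n:ℝ)*a)).indicator
      (fun t => (∏ i ∈ Finset.range n, W (t - ((i:ℝ)+1) * a))⁻¹ * y'f (t - (n:ℝ)*a))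
    with hgdef
  have hy'fmeas : Measurable y'f := hFYs.measurable.indicator measurableSet_Ioc
  have hgm : Measurable g := by
    refine Measurable.indicator (Measurable.mul (Measurable.inv ?_)
      (hy'fmeas.comp (measurable_id.sub measurable_const))) measurableSet_Ioi
    exact Finset.measurable_prod _ fun i _ =>
      hWs.measurable.comp (measurable_id.sub measurable_const)
  -- translation is measure preserving from Ioi (n*a) to Ioi 0
  have hmp : MeasurePreserving (fun t : ℝ => t - (n:ℝ)*a)
      (volume.restrict (Set.Ioi ((n:ℝ)*a))) (volume.restrict (Set.Ioi (0:ℝ))) := by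
    have h0 := (measurePreserving_add_right (volume : Measure ℝ) (-((n:ℝ)*a))).restrict_preimage
      (measurableSet_Ioi (a := (0:ℝ)))
    have hpre : (fun x:ℝ => x + -((n:ℝ)*a)) ⁻¹' (Set.Ioi (0:ℝ)) = Set.Ioi ((n:ℝ)*a) := by
      ext s
      simp only [mem_preimage, mem_Ioi]
      constructor <;> intro hs <;> linarith
    rw [hpre] at h0
    simpa [sub_eq_add_neg] using h0
  have hresna : (volume.restrict (Set.Ioi (0:ℝ))).restrict (Set.Ioi ((n:ℝ)*a))
      = volume.restrict (Set.Ioi ((n:ℝ)*a)) := by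
    rw [Measure.restrict_restrict measurableSet_Ioi,
      Set.inter_eq_left.2 (Set.Ioi_subset_Ioi hna0)]
  -- a.e. lower bound on the product of weights
  have hprodlb : ∀ᵐ t ∂(volume.restrict (Set.Ioi (0:ℝ))), t ∈ Set.Ioi ((n:ℝ)*a) →
      m ^ n ≤ ∏ i ∈ Finset.range n, ‖W (t - ((i:ℝ)+1)*a)‖ := by
    have hall : ∀ᵐ t ∂(volume.restrict (Set.Ioi (0:ℝ))), ∀ i ∈ Finset.range n,
        (0 < t - ((i:ℝ)+1)*a → m ≤ ‖W (t - ((i:ℝ)+1)*a)‖) := by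
      rw [eventually_all_finset]
      exact fun i _ => stmt1_ae_shift_bwd hWm _
    filter_upwards [hall] with t hthis htmem
    have each : ∀ i ∈ Finset.range n, m ≤ ‖W (t - ((i:ℝ)+1)*a)‖ := by
      intro i hi
      apply hthis i hi
      have hin : (i:ℝ) + 1 ≤ (n:ℝ) := by exact_mod_cast Nat.succ_le_of_lt (Finset.mem_range.1 hi)
      have hle : ((i:ℝ)+1)*a ≤ (n:ℝ)*a := mul_le_mul_of_nonneg_right hin ha.le
      simp only [mem_Ioi] at htmem
      linarith
    calc m ^ n = ∏ _i ∈ Finset.range n, m := by rw [Finset.prod_const, Finset.card_range]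
    _ ≤ ∏ i ∈ Finset.range n, ‖W (t - ((i:ℝ)+1)*a)‖ :=
        Finset.prod_le_prod (fun _ _ => by linarith) each
  -- pointwise bound for g
  set ind : ℝ → ℂ := (Set.Ioi ((n:ℝ)*a)).indicator (fun t => y'f (t - (n:ℝ)*a)) with hinddef
  have hgbd : ∀ᵐ t ∂(volume.restrict (Set.Ioi (0:ℝ))),
      ‖g t‖ ≤ ‖(((1/m)^n : ℝ)) • ind t‖ := by
    filter_upwards [hprodlb] with t hlb
    by_cases hmem : t ∈ Set.Ioi ((n:ℝ)*a)
    · rw [hgdef, hinddef, Set.indicator_of_mem hmem, Set.indicator_of_mem hmem,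
        norm_smul, norm_mul, norm_inv, norm_prod]
      have h1 := hlb hmem
      have hmn0 : (0:ℝ) < m ^ n := by positivity
      have hinv : (∏ i ∈ Finset.range n, ‖W (t - ((i:ℝ)+1)*a)‖)⁻¹ ≤ (m^n)⁻¹ :=
        inv_anti₀ hmn0 h1
      have hnrm : ‖((1/m)^n : ℝ)‖ = (m^n)⁻¹ := by
        rw [Real.norm_of_nonneg (by positivity), one_div, inv_pow]
      rw [hnrm]
      exact mul_le_mul_of_nonneg_right hinv (norm_nonneg _)
    · rw [hgdef, hinddef, Set.indicator_of_notMem hmem, Set.indicator_of_notMem hmem]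
      simp
  have hindnorm : eLpNorm ind p (volume.restrict (Set.Ioi (0:ℝ)))
      = eLpNorm y'f p (volume.restrict (Set.Ioi (0:ℝ))) := by
    rw [hinddef, eLpNorm_indicator_eq_eLpNorm_restrict measurableSet_Ioi, hresna,
      ← eLpNorm_comp_measurePreserving hy'mem.aestronglyMeasurable hmp]
    rfl
  have hebd : eLpNorm g p (volume.restrict (Set.Ioi (0:ℝ)))
      ≤ ENNReal.ofReal ((1/m)^n) * eLpNorm y'f p (volume.restrict (Set.Ioi (0:ℝ))) := by
    calc eLpNorm g p (volume.restrict (Set.Ioi (0:ℝ)))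
        ≤ eLpNorm ((((1/m)^n : ℝ)) • ind) p (volume.restrict (Set.Ioi (0:ℝ))) :=
          eLpNorm_mono_ae hgbd
    _ = (‖((1/m)^n : ℝ)‖ₑ : ENNReal) * eLpNorm ind p (volume.restrict (Set.Ioi (0:ℝ))) :=
          eLpNorm_const_smul _ _ _ _
    _ = ENNReal.ofReal ((1/m)^n) * eLpNorm y'f p (volume.restrict (Set.Ioi (0:ℝ))) := by
          rw [hindnorm, Real.enorm_eq_ofReal (by positivity)]
  have hgmem : MemLp g p (volume.restrict (Set.Ioi (0:ℝ))) :=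
    ⟨hgm.aestronglyMeasurable, lt_of_le_of_lt hebd
      (ENNReal.mul_lt_top ENNReal.ofReal_lt_top hKfin)⟩
  set G := hgmem.toLp g with hGdef
  have hGnorm : ‖G‖ < δ := by
    rw [hGdef, Lp.norm_toLp]
    have h1 : (eLpNorm g p (volume.restrict (Set.Ioi (0:ℝ)))).toReal ≤ ((1/m)^n) * K := by
      have h2 := ENNReal.toReal_mono
        (ENNReal.mul_lt_top ENNReal.ofReal_lt_top hKfin).ne hebd
      rwa [ENNReal.toReal_mul, ENNReal.toReal_ofReal (by positivity)] at h2
    have h3 : ((1/m)^n) * K ≤ ((1/m)^n) * (K+1) :=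
      mul_le_mul_of_nonneg_left (by linarith) (by positivity)
    linarith
  -- the point z
  set z := x' + G with hzdef
  have hzU : z ∈ U := by
    apply hBU
    rw [Metric.mem_ball, dist_eq_norm]
    have hze : z - x = (x' - x) + G := by rw [hzdef]; abel
    have hzn : ‖z - x‖ ≤ ‖x' - x‖ + ‖G‖ := by rw [hze]; exact norm_add_le _ _
    have hmin : δ + δ < εU := by
      have := min_le_left εU εV
      rw [hδdef]; linarith
    linarith
  -- the main computation : T^n z agrees a.e. with y'f
  have hzcoe : (z : ℝ → ℂ) =ᵐ[volume.restrict (Set.Ioi (0:ℝ))] fun t => x'f t + g t := by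
    rw [hzdef]
    filter_upwards [Lp.coeFn_add x' G, hx'mem.coeFn_toLp, hgmem.coeFn_toLp] with t h1 h2 h3
    rw [h1, Pi.add_apply, h2, h3]
  have hzsh : ∀ᵐ t ∂(volume.restrict (Set.Ioi (0:ℝ))),
      (z : ℝ → ℂ) (t + (n:ℝ)*a) = x'f (t + (n:ℝ)*a) + g (t + (n:ℝ)*a) :=
    stmt1_ae_shift_fwd (Q := fun t => (z : ℝ → ℂ) t = x'f t + g t) hzcoe hna0
  have hWfwd : ∀ᵐ t ∂(volume.restrict (Set.Ioi (0:ℝ))), ∀ i ∈ Finset.range n,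
      m ≤ ‖W (t + (i:ℝ)*a)‖ := by
    rw [eventually_all_finset]
    exact fun i _ => stmt1_ae_shift_fwd hWm (by positivity)
  have hfinal : (((T^n) z : ℝ → ℂ)) =ᵐ[volume.restrict (Set.Ioi (0:ℝ))] y'f := by
    filter_upwards [hTn n z, hzsh, hWfwd, hmem0] with t h1 h2 h3 ht
    simp only [mem_Ioi] at ht
    rw [h1, h2]
    have hx0 : x'f (t + (n:ℝ)*a) = 0 := by
      apply Set.indicator_of_notMem
      intro hc
      exact absurd hc.2 (not_le.2 (by linarith))
    have htmem : t + (n:ℝ)*a ∈ Set.Ioi ((n:ℝ)*a) := by simp only [mem_Ioi]; linarith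
    have hg0 : g (t + (n:ℝ)*a)
        = (∏ i ∈ Finset.range n, W (t + (n:ℝ)*a - ((i:ℝ)+1)*a))⁻¹ * y'f t := by
      rw [hgdef, Set.indicator_of_mem htmem]
      congr 1
      rw [add_sub_cancel_right]
    have hQP : ∏ i ∈ Finset.range n, W (t + (n:ℝ)*a - ((i:ℝ)+1)*a)
        = ∏ i ∈ Finset.range n, W (t + (i:ℝ)*a) := by
      rw [← Finset.prod_range_reflect (fun i => W (t + (i:ℝ)*a)) n]
      refine Finset.prod_congr rfl fun i hi => ?_
      congr 1
      have hi' : i < n := Finset.mem_range.1 hi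
      have hcast : ((n - 1 - i : ℕ) : ℝ) = (n:ℝ) - (i:ℝ) - 1 := by
        rw [Nat.sub_sub, Nat.cast_sub (by omega : 1 + i ≤ n)]
        push_cast; ring
      rw [hcast]; ring
    have hPne : (∏ i ∈ Finset.range n, W (t + (i:ℝ)*a)) ≠ 0 := by
      rw [Finset.prod_ne_zero_iff]
      intro i hi h0
      have := h3 i hi
      rw [h0, norm_zero] at this
      linarith
    rw [hx0, hg0, hQP, zero_add, ← mul_assoc, mul_inv_cancel₀ hPne, one_mul]
  -- conclusion
  have hdistTz : dist ((T^n) z) y' = 0 := by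
    rw [dist_eq_norm, Lp.norm_def]
    have hzero : ⇑((T^n) z - y') =ᵐ[volume.restrict (Set.Ioi (0:ℝ))] (0 : ℝ → ℂ) := by
      filter_upwards [Lp.coeFn_sub ((T^n) z) y', hfinal, hy'mem.coeFn_toLp] with t h1 h2 h3
      rw [h1, Pi.sub_apply, h2, h3]
      simp
    rw [eLpNorm_congr_ae hzero, eLpNorm_zero]
    simp
  have hTzV : (T^n) z ∈ V := by
    apply hBV
    rw [Metric.mem_ball]
    have htri := dist_triangle ((T^n) z) y' y
    have hdy' : dist y' y < δ := by rw [dist_eq_norm]; exact hdy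
    have hmin : δ < εV := by
      have := min_le_right εU εV
      rw [hδdef]; linarith
    rw [hdistTz] at htri
    linarith
  exact ⟨n, (T^n) z, ⟨z, hzU, rfl⟩, hTzV⟩
end

section
/- The set of periodic points of T is dense in L^p(0,∞); consequently T is chaotic. -/
open MeasureTheory Filter Set

namespace Chaos2

noncomputable section

local notation "μ₀" => MeasureTheory.volume.restrict (Set.Ioi (0:ℝ))

variable {p : ENNReal} [Fact (1 ≤ p)]

/-- The weighted forward-shift function. -/
def Sfun (a : ℝ) (w : ℝ → ℂ) (z : ℝ → ℂ) : ℝ → ℂ :=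
  (Ioi a).indicator (fun t => (w (t - a))⁻¹ * z (t - a))

lemma shift_ae {b : ℝ} {P : ℝ → Prop} (h : ∀ᵐ t ∂(volume : Measure ℝ), P t) :
    ∀ᵐ t ∂(volume : Measure ℝ), P (t + b) :=
  ((measurePreserving_add_right volume b).quasiMeasurePreserving.tendsto_ae).eventually h

lemma map_add_restrict (a : ℝ) :
    (volume.restrict (Ioi (0:ℝ))).map (fun t => t + a) = volume.restrict (Ioi a) := by
  have h1 : (fun t : ℝ => t + a) ⁻¹' (Ioi a) = Ioi (0:ℝ) := by
    rw [preimage_add_const_Ioi, sub_self]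
  rw [← h1, ← Measure.restrict_map (measurable_add_const a) measurableSet_Ioi,
    (measurePreserving_add_right volume a).map_eq]

variable {a : ℝ} {w : ℝ → ℂ} {m : ℝ}

lemma aesm_aux (ha : 0 < a)
    (hw : AEStronglyMeasurable w (volume.restrict (Set.Ioi (0:ℝ))))
    (z : ℝ → ℂ) (hz : AEStronglyMeasurable z (volume.restrict (Set.Ioi (0:ℝ)))) :
    AEStronglyMeasurable (fun t => (w (t - a))⁻¹ * z (t - a))
      (volume.restrict (Ioi a)) := by
  have hemb : MeasurableEmbedding (fun t : ℝ => t + a) := by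
    have := (MeasurableEquiv.addRight a).measurableEmbedding
    simpa [MeasurableEquiv.coe_addRight] using this
  rw [← map_add_restrict a, hemb.aestronglyMeasurable_map_iff]
  have : ((fun t => (w (t - a))⁻¹ * z (t - a)) ∘ (fun t : ℝ => t + a))
      = fun t => (w t)⁻¹ * z t := by
    funext t; simp [Function.comp, add_sub_cancel_right]
  rw [this]
  exact (hw.aemeasurable.inv.aestronglyMeasurable).mul hz

lemma eLpNorm_Sfun_le (hp : p ≠ ⊤) (ha : 0 < a) (hm : 1 < m)
    (hwm : ∀ t : ℝ, 0 < t → m ≤ ‖w t‖)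
    (hw : AEStronglyMeasurable w (volume.restrict (Set.Ioi (0:ℝ))))
    (z : ℝ → ℂ) (hz : AEStronglyMeasurable z (volume.restrict (Set.Ioi (0:ℝ)))) :
    eLpNorm (Sfun a w z) p (volume.restrict (Ioi (0:ℝ)))
      ≤ ENNReal.ofReal m⁻¹ * eLpNorm z p (volume.restrict (Ioi (0:ℝ))) := by
  have hm0 : (0:ℝ) < m := lt_trans one_pos hm
  have h1 : eLpNorm (Sfun a w z) p (volume.restrict (Ioi (0:ℝ)))
      = eLpNorm (fun t => (w (t - a))⁻¹ * z (t - a)) p (volume.restrict (Ioi a)) := by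
    rw [Sfun, eLpNorm_indicator_eq_eLpNorm_restrict measurableSet_Ioi,
      Measure.restrict_restrict measurableSet_Ioi,
      inter_eq_self_of_subset_left (Ioi_subset_Ioi ha.le)]
  have h2 : eLpNorm (fun t => (w (t - a))⁻¹ * z (t - a)) p (volume.restrict (Ioi a))
      = eLpNorm (fun t => (w t)⁻¹ * z t) p (volume.restrict (Ioi (0:ℝ))) := by
    rw [← map_add_restrict a, eLpNorm_map_measure]
    · congr 1; funext t; simp [add_sub_cancel_right]
    · rw [map_add_restrict a]; exact aesm_aux ha hw z hz
    · exact (measurable_add_const a).aemeasurable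
  rw [h1, h2]
  have h3 : eLpNorm (fun t => (w t)⁻¹ * z t) p (volume.restrict (Ioi (0:ℝ)))
      ≤ eLpNorm ((m⁻¹ : ℝ) • z) p (volume.restrict (Ioi (0:ℝ))) := by
    apply eLpNorm_mono_ae
    filter_upwards [ae_restrict_mem measurableSet_Ioi] with t ht
    have hwt : m ≤ ‖w t‖ := hwm t ht
    rw [Pi.smul_apply, norm_mul, norm_inv, norm_smul, Real.norm_eq_abs,
      abs_of_pos (inv_pos.mpr hm0)]
    apply mul_le_mul_of_nonneg_right _ (norm_nonneg _)
    exact inv_anti₀ hm0 hwt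
  refine h3.trans_eq ?_
  rw [eLpNorm_const_smul, Real.enorm_eq_ofReal (inv_nonneg.mpr hm0.le)]

lemma memLp_Sfun (hp : p ≠ ⊤) (ha : 0 < a) (hm : 1 < m)
    (hwm : ∀ t : ℝ, 0 < t → m ≤ ‖w t‖)
    (hw : AEStronglyMeasurable w (volume.restrict (Set.Ioi (0:ℝ))))
    (z : Lp ℂ p (volume.restrict (Set.Ioi (0:ℝ)))) :
    MemLp (Sfun a w ⇑z) p (volume.restrict (Ioi (0:ℝ))) := by
  constructor
  · rw [Sfun, aestronglyMeasurable_indicator_iff measurableSet_Ioi,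
      Measure.restrict_restrict measurableSet_Ioi,
      inter_eq_self_of_subset_left (Ioi_subset_Ioi ha.le)]
    exact aesm_aux ha hw ⇑z (Lp.aestronglyMeasurable z)
  · refine lt_of_le_of_lt (eLpNorm_Sfun_le hp ha hm hwm hw ⇑z (Lp.aestronglyMeasurable z)) ?_
    exact ENNReal.mul_lt_top ENNReal.ofReal_lt_top (Lp.eLpNorm_lt_top z)

/-- Existence of the weighted forward shift operator `S`. -/
lemma exists_S (hp : p ≠ ⊤) (ha : 0 < a) (hm : 1 < m)
    (hwm : ∀ t : ℝ, 0 < t → m ≤ ‖w t‖)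
    (hw : AEStronglyMeasurable w (volume.restrict (Set.Ioi (0:ℝ)))) :
    ∃ S : Lp ℂ p (volume.restrict (Set.Ioi (0:ℝ))) →L[ℂ]
        Lp ℂ p (volume.restrict (Set.Ioi (0:ℝ))),
      ‖S‖ ≤ m⁻¹ ∧ ∀ z, ⇑(S z) =ᵐ[volume.restrict (Set.Ioi (0:ℝ))] Sfun a w ⇑z := by
  have hm0 : (0:ℝ) < m := lt_trans one_pos hm
  set μ := volume.restrict (Set.Ioi (0:ℝ)) with hμ
  -- pointwise a.e. congruence of Sfun
  have hcong : ∀ (z₁ z₂ : Lp ℂ p μ) (c₁ c₂ : ℂ),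
      (⇑(c₁ • z₁ + c₂ • z₂) : ℝ → ℂ) =ᵐ[μ] (fun t => c₁ * ⇑z₁ t + c₂ * ⇑z₂ t) := by
    intro z₁ z₂ c₁ c₂
    filter_upwards [Lp.coeFn_add (c₁ • z₁) (c₂ • z₂), Lp.coeFn_smul c₁ z₁,
      Lp.coeFn_smul c₂ z₂] with t h1 h2 h3
    simp only [h1, Pi.add_apply, h2, h3, Pi.smul_apply, smul_eq_mul]
  have hSf_comb : ∀ (z₁ z₂ : Lp ℂ p μ) (c₁ c₂ : ℂ),
      Sfun a w ⇑(c₁ • z₁ + c₂ • z₂)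
        =ᵐ[μ] fun t => c₁ * Sfun a w ⇑z₁ t + c₂ * Sfun a w ⇑z₂ t := by
    intro z₁ z₂ c₁ c₂
    have h0 : ∀ᵐ t ∂(volume : Measure ℝ), t ∈ Ioi (0:ℝ) →
        (⇑(c₁ • z₁ + c₂ • z₂) : ℝ → ℂ) t = c₁ * ⇑z₁ t + c₂ * ⇑z₂ t :=
      (ae_restrict_iff' measurableSet_Ioi).mp (hcong z₁ z₂ c₁ c₂)
    have h1 : ∀ᵐ t ∂(volume : Measure ℝ), (t + (-a)) ∈ Ioi (0:ℝ) →
        (⇑(c₁ • z₁ + c₂ • z₂) : ℝ → ℂ) (t + (-a))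
          = c₁ * ⇑z₁ (t + (-a)) + c₂ * ⇑z₂ (t + (-a)) := shift_ae h0
    refine ((h1.mono ?_).filter_mono (ae_mono Measure.restrict_le_self))
    intro t ht
    by_cases hta : t ∈ Ioi a
    · have h2 : t + (-a) ∈ Ioi (0:ℝ) := by
        simp only [mem_Ioi] at hta ⊢; linarith
      have h3 := ht h2
      rw [← sub_eq_add_neg] at h3
      simp only [Sfun, indicator_of_mem hta, h3]
      ring
    · simp [Sfun, indicator_of_notMem hta]
  -- the linear map
  let S₀ : Lp ℂ p μ →ₗ[ℂ] Lp ℂ p μ :=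
    { toFun := fun z => (memLp_Sfun hp ha hm hwm hw z).toLp (Sfun a w ⇑z)
      map_add' := by
        intro z₁ z₂
        apply Lp.ext
        filter_upwards [MemLp.coeFn_toLp (memLp_Sfun hp ha hm hwm hw (z₁ + z₂)),
          Lp.coeFn_add ((memLp_Sfun hp ha hm hwm hw z₁).toLp _)
            ((memLp_Sfun hp ha hm hwm hw z₂).toLp _),
          MemLp.coeFn_toLp (memLp_Sfun hp ha hm hwm hw z₁),
          MemLp.coeFn_toLp (memLp_Sfun hp ha hm hwm hw z₂),
          (by simpa using hSf_comb z₁ z₂ 1 1 :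
            Sfun a w ⇑(z₁ + z₂) =ᵐ[μ] fun t => Sfun a w ⇑z₁ t + Sfun a w ⇑z₂ t)]
          with t h1 h2 h3 h4 h5
        rw [h1, h5, h2, Pi.add_apply, h3, h4]
      map_smul' := by
        intro c z
        apply Lp.ext
        filter_upwards [MemLp.coeFn_toLp (memLp_Sfun hp ha hm hwm hw (c • z)),
          Lp.coeFn_smul c ((memLp_Sfun hp ha hm hwm hw z).toLp _),
          MemLp.coeFn_toLp (memLp_Sfun hp ha hm hwm hw z),
          (by simpa using hSf_comb z 0 c 0 :
            Sfun a w ⇑(c • z) =ᵐ[μ] fun t => c * Sfun a w ⇑z t)]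
          with t h1 h2 h3 h4
        rw [h1, h4, RingHom.id_apply, h2, Pi.smul_apply, h3, smul_eq_mul] }
  have hbound : ∀ z : Lp ℂ p μ, ‖S₀ z‖ ≤ m⁻¹ * ‖z‖ := by
    intro z
    have h1 : ‖S₀ z‖ = (eLpNorm (Sfun a w ⇑z) p μ).toReal :=
      Lp.norm_toLp _ (memLp_Sfun hp ha hm hwm hw z)
    rw [h1, Lp.norm_def]
    rw [← ENNReal.toReal_ofReal (inv_nonneg.mpr hm0.le), ← ENNReal.toReal_mul]
    apply ENNReal.toReal_mono
    · exact ENNReal.mul_ne_top ENNReal.ofReal_ne_top (Lp.eLpNorm_ne_top z)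
    · exact eLpNorm_Sfun_le hp ha hm hwm hw ⇑z (Lp.aestronglyMeasurable z)
  refine ⟨S₀.mkContinuous m⁻¹ hbound, ?_, ?_⟩
  · exact S₀.mkContinuous_norm_le (inv_nonneg.mpr hm0.le) hbound
  · intro z
    exact MemLp.coeFn_toLp (memLp_Sfun hp ha hm hwm hw z)

variable {T : Lp ℂ p (volume.restrict (Set.Ioi (0:ℝ))) →L[ℂ]
    Lp ℂ p (volume.restrict (Set.Ioi (0:ℝ)))}

lemma T_mul_S (ha : 0 < a) (hm : 1 < m)
    (hwm : ∀ t : ℝ, 0 < t → m ≤ ‖w t‖)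
    (hT : ∀ x : Lp ℂ p (volume.restrict (Set.Ioi (0:ℝ))),
      (T x : ℝ → ℂ) =ᵐ[volume.restrict (Set.Ioi (0:ℝ))] fun t => w t * x (t + a))
    {S : Lp ℂ p (volume.restrict (Set.Ioi (0:ℝ))) →L[ℂ]
        Lp ℂ p (volume.restrict (Set.Ioi (0:ℝ)))}
    (hS : ∀ z, ⇑(S z) =ᵐ[volume.restrict (Set.Ioi (0:ℝ))] Sfun a w ⇑z) :
    T * S = 1 := by
  have hm0 : (0:ℝ) < m := lt_trans one_pos hm
  refine ContinuousLinearMap.ext fun z => ?_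
  rw [ContinuousLinearMap.mul_apply, ContinuousLinearMap.one_apply]
  apply Lp.ext
  have h2 : ∀ᵐ t ∂(volume : Measure ℝ), t ∈ Ioi (0:ℝ) → ⇑(S z) t = Sfun a w ⇑z t :=
    (ae_restrict_iff' measurableSet_Ioi).mp (hS z)
  have h3 : ∀ᵐ t ∂(volume : Measure ℝ), (t + a) ∈ Ioi (0:ℝ) →
      ⇑(S z) (t + a) = Sfun a w ⇑z (t + a) := shift_ae h2
  filter_upwards [hT (S z), h3.filter_mono (ae_mono Measure.restrict_le_self),
    ae_restrict_mem measurableSet_Ioi] with t h1t h3t ht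
  have ht0 : (0:ℝ) < t := ht
  have hta : t + a ∈ Ioi (0:ℝ) := by simp only [mem_Ioi]; linarith
  have htIa : t + a ∈ Ioi a := by simp only [mem_Ioi]; linarith
  have hwne : w t ≠ 0 := by
    have : (0:ℝ) < ‖w t‖ := lt_of_lt_of_le hm0 (hwm t ht0)
    exact norm_pos_iff.mp this
  rw [h1t, h3t hta, Sfun, indicator_of_mem htIa, add_sub_cancel_right,
    mul_inv_cancel_left₀ hwne]

lemma T_pow_vanish (ha : 0 < a)
    (hT : ∀ x : Lp ℂ p (volume.restrict (Set.Ioi (0:ℝ))),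
      (T x : ℝ → ℂ) =ᵐ[volume.restrict (Set.Ioi (0:ℝ))] fun t => w t * x (t + a)) :
    ∀ n : ℕ, ∀ y : Lp ℂ p (volume.restrict (Set.Ioi (0:ℝ))),
      (∀ᵐ t ∂(volume : Measure ℝ), t ∈ Ioi ((n : ℝ) * a) → ⇑y t = 0) → (T ^ n) y = 0 := by
  intro n
  induction n with
  | zero =>
    intro y hy
    rw [pow_zero, ContinuousLinearMap.one_apply]
    apply Lp.ext
    have hy' : ∀ᵐ t ∂(volume : Measure ℝ), t ∈ Ioi (0:ℝ) → ⇑y t = 0 := by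
      simpa using hy
    filter_upwards [(ae_restrict_iff' measurableSet_Ioi).mpr hy',
      Lp.coeFn_zero (E := ℂ) (p := p) (μ := volume.restrict (Set.Ioi (0:ℝ)))] with t h1 h2
    rw [h1, h2]; rfl
  | succ n ih =>
    intro y hy
    rw [pow_succ, ContinuousLinearMap.mul_apply]
    apply ih (T y)
    have hTy : ∀ᵐ t ∂(volume : Measure ℝ), t ∈ Ioi (0:ℝ) →
        ⇑(T y) t = w t * ⇑y (t + a) := (ae_restrict_iff' measurableSet_Ioi).mp (hT y)
    filter_upwards [hTy, shift_ae (P := fun s => s ∈ Ioi (((n:ℕ)+1 : ℝ) * a) → ⇑y s = 0)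
      (by simpa using hy)] with t h1 h2 hmem
    have hna : (0:ℝ) ≤ (n : ℝ) * a := by positivity
    have ht0 : t ∈ Ioi (0:ℝ) := by
      simp only [mem_Ioi] at hmem ⊢; linarith
    have ht1 : t + a ∈ Ioi (((n:ℕ)+1 : ℝ) * a) := by
      simp only [mem_Ioi] at hmem ⊢; ring_nf; linarith
    rw [h1 ht0, h2 ht1, mul_zero]

/-- Truncation: every element of `Lp` is approximated by elements supported in `(0, K]`. -/
lemma exists_truncation (hp : p ≠ ⊤)
    (x : Lp ℂ p (volume.restrict (Set.Ioi (0:ℝ)))) {ε : ℝ} (hε : 0 < ε) :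
    ∃ (x' : Lp ℂ p (volume.restrict (Set.Ioi (0:ℝ)))) (K : ℝ), 0 ≤ K ∧ ‖x - x'‖ < ε ∧
      ∀ᵐ t ∂(volume : Measure ℝ), t ∈ Ioi K → ⇑x' t = 0 := by
  have hp0 : p ≠ 0 := by
    intro h
    have := Fact.out (p := 1 ≤ p)
    rw [h] at this
    simp at this
  set q := p.toReal with hq
  have hq0 : 0 < q := ENNReal.toReal_pos hp0 hp
  have hf := Lp.memLp x
  set f : ℝ → ℂ := ⇑x with hfdef
  -- the lintegrals over the tails tend to zero
  have htends : Tendsto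
      (fun n : ℕ => ∫⁻ t, (Ioi (n:ℝ)).indicator (fun s => (‖f s‖₊ : ENNReal) ^ q) t ∂μ₀)
      atTop (nhds 0) := by
    have h0 : (0 : ENNReal) = ∫⁻ _, 0 ∂μ₀ := by simp
    rw [h0]
    apply tendsto_lintegral_of_dominated_convergence' (fun t => (‖f t‖₊ : ENNReal) ^ q)
    · intro n
      exact (hf.1.enorm.pow_const q).indicator measurableSet_Ioi
    · intro n
      exact Eventually.of_forall fun t => indicator_le_self _ _ t
    · exact ((eLpNorm_lt_top_iff_lintegral_rpow_enorm_lt_top hp0 hp).mp hf.2).ne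
    · apply Eventually.of_forall
      intro t
      refine Filter.Tendsto.congr' ?_ tendsto_const_nhds
      filter_upwards [eventually_ge_atTop (Nat.ceil t)] with n hn
      have : t ∉ Ioi (n:ℝ) := by
        simp only [mem_Ioi, not_lt]
        exact le_trans (Nat.le_ceil t) (by exact_mod_cast hn)
      rw [indicator_of_notMem this]
  -- choose a good cutoff
  have hεq : (0:ENNReal) < (ENNReal.ofReal ε) ^ q :=
    ENNReal.rpow_pos (ENNReal.ofReal_pos.mpr hε) ENNReal.ofReal_ne_top
  obtain ⟨n, hn⟩ := (htends.eventually_lt_const hεq).exists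
  set x' : Lp ℂ p (volume.restrict (Set.Ioi (0:ℝ))) :=
    (hf.indicator measurableSet_Iic).toLp ((Iic (n:ℝ)).indicator f) with hx'def
  have hcoe : ⇑x' =ᵐ[μ₀] (Iic (n:ℝ)).indicator f :=
    MemLp.coeFn_toLp (f := (Iic (n:ℝ)).indicator f) (hf.indicator measurableSet_Iic)
  have hsub : ⇑(x - x') =ᵐ[μ₀] (Ioi (n:ℝ)).indicator f := by
    filter_upwards [Lp.coeFn_sub x x', hcoe] with t h1 h2
    rw [h1, Pi.sub_apply, h2]
    by_cases hti : t ≤ (n:ℝ)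
    · rw [indicator_of_mem (mem_Iic.mpr hti),
        indicator_of_notMem (by simpa using hti : t ∉ Ioi (n:ℝ)), sub_self]
    · rw [indicator_of_notMem (by simpa using hti : t ∉ Iic (n:ℝ)),
        indicator_of_mem (by simpa using hti : t ∈ Ioi (n:ℝ)), sub_zero]
  refine ⟨x', (n:ℝ), Nat.cast_nonneg n, ?_, ?_⟩
  · rw [Lp.norm_def, eLpNorm_congr_ae hsub]
    have heq : eLpNorm ((Ioi (n:ℝ)).indicator f) p μ₀
        = (∫⁻ t, (Ioi (n:ℝ)).indicator (fun s => (‖f s‖₊ : ENNReal) ^ q) t ∂μ₀) ^ (1/q) := by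
      rw [eLpNorm_eq_lintegral_rpow_enorm_toReal hp0 hp]
      congr 1
      apply lintegral_congr
      intro t
      by_cases hti : t ∈ Ioi (n:ℝ)
      · rw [indicator_of_mem hti, indicator_of_mem hti]; rfl
      · rw [indicator_of_notMem hti, indicator_of_notMem hti]
        simp [ENNReal.zero_rpow_of_pos hq0]; exact hq0
    rw [heq]
    apply ENNReal.toReal_lt_of_lt_ofReal
    calc (∫⁻ t, (Ioi (n:ℝ)).indicator (fun s => (‖f s‖₊ : ENNReal) ^ q) t ∂μ₀) ^ (1/q)
        < ((ENNReal.ofReal ε) ^ q) ^ (1/q) :=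
          ENNReal.rpow_lt_rpow hn (by positivity)
      _ = ENNReal.ofReal ε := by
          rw [← ENNReal.rpow_mul, mul_one_div_cancel hq0.ne', ENNReal.rpow_one]
  · have hx'' : ∀ᵐ t ∂(volume : Measure ℝ), t ∈ Ioi (0:ℝ) →
        ⇑x' t = (Iic (n:ℝ)).indicator f t := (ae_restrict_iff' measurableSet_Ioi).mp hcoe
    filter_upwards [hx''] with t h1 hmem
    have ht0 : t ∈ Ioi (0:ℝ) := by
      simp only [mem_Ioi] at hmem ⊢
      exact lt_of_le_of_lt (Nat.cast_nonneg n) hmem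
    rw [h1 ht0, indicator_of_notMem (by simpa using not_le.mpr hmem : t ∉ Iic (n:ℝ))]

end

end Chaos2

set_option maxHeartbeats 1000000
set_option synthInstance.maxHeartbeats 400000

/-- with `|w(t)| ≥ m > 1` and `w` bounded, the set of periodic points
of `T` is dense in `L^p(0,∞)`, and consequently `T` is chaotic (hypercyclic with
a dense set of periodic points). -/
theorem stmt2 (p : ENNReal) [Fact (1 ≤ p)] (hp : p ≠ ⊤) (a : ℝ) (ha : 0 < a)
    (w : ℝ → ℂ) (m C : ℝ) (hm : 1 < m) (hwm : ∀ t : ℝ, 0 < t → m ≤ ‖w t‖)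
    (hwC : ∀ t : ℝ, 0 < t → ‖w t‖ ≤ C)
    (hw : AEStronglyMeasurable w (volume.restrict (Set.Ioi (0:ℝ))))
    (T : Lp ℂ p (volume.restrict (Set.Ioi (0:ℝ))) →L[ℂ]
         Lp ℂ p (volume.restrict (Set.Ioi (0:ℝ))))
    (hT : ∀ x : Lp ℂ p (volume.restrict (Set.Ioi (0:ℝ))),
      (T x : ℝ → ℂ) =ᵐ[volume.restrict (Set.Ioi (0:ℝ))] fun t => w t * x (t + a)) :
    Dense {x : Lp ℂ p (volume.restrict (Set.Ioi (0:ℝ))) |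
        ∃ N : ℕ, 0 < N ∧ (T ^ N) x = x} ∧
      ∃ x : Lp ℂ p (volume.restrict (Set.Ioi (0:ℝ))),
        Dense (Set.range fun n : ℕ => (T ^ n) x) := by
  classical
  have hm0 : (0:ℝ) < m := lt_trans one_pos hm
  have hminv1 : m⁻¹ < 1 := by
    rw [inv_lt_one_iff₀]; right; exact hm
  have hminv0 : (0:ℝ) ≤ m⁻¹ := inv_nonneg.mpr hm0.le
  obtain ⟨S, hSnorm, hScoe⟩ := Chaos2.exists_S hp ha hm hwm hw
  have hTS : T * S = 1 := Chaos2.T_mul_S ha hm hwm hT hScoe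
  have hTSn : ∀ n : ℕ, T ^ n * S ^ n = 1 := by
    intro n
    induction n with
    | zero => simp
    | succ n ih =>
      rw [pow_succ T, pow_succ' S, mul_assoc, ← mul_assoc T, hTS, one_mul, ih]
  have hvan := Chaos2.T_pow_vanish (p := p) (w := w) (T := T) ha hT
  have hSn : ∀ n : ℕ, 0 < n → ‖S ^ n‖ ≤ m⁻¹ ^ n := by
    intro n hn
    exact le_trans (norm_pow_le' S hn) (pow_le_pow_left₀ (norm_nonneg S) hSnorm n)
  -- choice of large N
  have hchoose : ∀ K δ : ℝ, 0 < δ → ∃ N : ℕ, 0 < N ∧ K ≤ (N:ℝ) * a ∧ m⁻¹ ^ N < δ := by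
    intro K δ hδ
    have h1 : Filter.Tendsto (fun N : ℕ => m⁻¹ ^ N) atTop (nhds 0) :=
      tendsto_pow_atTop_nhds_zero_of_lt_one hminv0 hminv1
    have h2 : Filter.Tendsto (fun N : ℕ => (N:ℝ) * a) atTop atTop :=
      Filter.Tendsto.atTop_mul_const ha tendsto_natCast_atTop_atTop
    obtain ⟨N, hN⟩ := ((h1.eventually_lt_const hδ).and
      ((h2.eventually_ge_atTop K).and (eventually_ge_atTop 1))).exists
    exact ⟨N, hN.2.2, hN.2.1, hN.1⟩
  -- generic periodic/transitivity construction
  have hkey : ∀ (x' : Lp ℂ p (volume.restrict (Set.Ioi (0:ℝ)))) (K : ℝ),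
      (∀ᵐ t ∂(volume : Measure ℝ), t ∈ Set.Ioi K → ⇑x' t = 0) →
      ∀ N : ℕ, 0 < N → K ≤ (N:ℝ) * a → (T ^ N) x' = 0 := by
    intro x' K hsupp N hN hKN
    apply hvan N x'
    filter_upwards [hsupp] with t h1 ht
    exact h1 (Set.Ioi_subset_Ioi hKN ht)
  constructor
  · -- dense periodic points
    rw [Metric.dense_iff]
    intro x r hr
    obtain ⟨x', K, hK0, hxx', hsupp⟩ := Chaos2.exists_truncation hp x (half_pos hr)
    set δ := min ((r/2) / (2 * ‖x'‖ + 1)) 2⁻¹ with hδdef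
    have hδpos : 0 < δ := by
      apply lt_min _ (by norm_num)
      positivity
    obtain ⟨N, hN1, hN2, hN3⟩ := hchoose K δ hδpos
    set q : ℝ := m⁻¹ ^ N with hqdef
    have hq0 : 0 ≤ q := pow_nonneg hminv0 N
    have hqhalf : q ≤ 1/2 := by
      have := lt_of_lt_of_le hN3 (min_le_right _ _)
      linarith
    have hSNlt1 : ‖S ^ N‖ < 1 := lt_of_le_of_lt (hSn N hN1) (by linarith)
    set u := Units.oneSub (S ^ N) hSNlt1 with hudef
    set y := u.inv x' with hydef
    have hy1 : x' = y - (S ^ N) y := by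
      have h := congrArg (fun A => A x') u.val_inv
      simp only [ContinuousLinearMap.mul_apply, ContinuousLinearMap.one_apply] at h
      have h2 : u.val = 1 - S ^ N := rfl
      rw [h2] at h
      simpa [ContinuousLinearMap.sub_apply, ContinuousLinearMap.one_apply, hydef] using h.symm
    have hy2 : y = x' + (S ^ N) y := by
      rw [hy1]; abel
    have hTNy : (T ^ N) y = y := by
      have hvanx' : (T ^ N) x' = 0 := hkey x' K hsupp N hN1 hN2
      calc (T ^ N) y = (T ^ N) x' + (T ^ N) ((S ^ N) y) := by
            conv_lhs => rw [hy2]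
            rw [map_add]
        _ = 0 + (T ^ N * S ^ N) y := by rw [hvanx', ContinuousLinearMap.mul_apply]
        _ = y := by rw [hTSn N, zero_add, ContinuousLinearMap.one_apply]
    have hSNy : ‖(S ^ N) y‖ ≤ q * ‖y‖ :=
      le_trans ((S ^ N).le_opNorm y) (mul_le_mul_of_nonneg_right (hSn N hN1) (norm_nonneg y))
    have hybound : ‖y‖ ≤ 2 * ‖x'‖ := by
      have h3 : ‖y‖ ≤ ‖x'‖ + ‖(S ^ N) y‖ := by
        conv_lhs => rw [hy2]
        exact norm_add_le _ _
      nlinarith [norm_nonneg y]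
    have hdiff : y - x' = (S ^ N) y := by rw [hy1]; abel
    have hdist1 : ‖y - x'‖ < r/2 := by
      rw [hdiff]
      have h4 : q * ‖y‖ ≤ q * (2 * ‖x'‖) := mul_le_mul_of_nonneg_left hybound hq0
      have h5 : q < (r/2) / (2 * ‖x'‖ + 1) := lt_of_lt_of_le hN3 (min_le_left _ _)
      have h6 : q * (2 * ‖x'‖) < (r/2) / (2 * ‖x'‖ + 1) * (2 * ‖x'‖ + 1) := by
        have hpos : (0:ℝ) < 2 * ‖x'‖ + 1 := by positivity
        calc q * (2 * ‖x'‖) ≤ q * (2 * ‖x'‖ + 1) := by nlinarith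
          _ < (r/2) / (2 * ‖x'‖ + 1) * (2 * ‖x'‖ + 1) := by
              exact mul_lt_mul_of_pos_right h5 hpos
      have h7 : (r/2) / (2 * ‖x'‖ + 1) * (2 * ‖x'‖ + 1) = r/2 := by
        field_simp
      calc ‖(S ^ N) y‖ ≤ q * ‖y‖ := hSNy
        _ ≤ q * (2 * ‖x'‖) := h4
        _ < r/2 := by rw [← h7]; exact h6
    refine ⟨y, Metric.mem_ball.mpr ?_, ⟨N, hN1, hTNy⟩⟩
    rw [dist_eq_norm]
    have : y - x = (y - x') + (x' - x) := by abel
    rw [this]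
    have h8 : ‖x' - x‖ < r/2 := by rw [norm_sub_rev]; exact hxx'
    calc ‖(y - x') + (x' - x)‖ ≤ ‖y - x'‖ + ‖x' - x‖ := norm_add_le _ _
      _ < r/2 + r/2 := add_lt_add hdist1 h8
      _ = r := by ring
  · -- hypercyclic vector via Baire
    haveI : Fact (p ≠ ⊤) := ⟨hp⟩
    obtain ⟨s, hsc, hsd⟩ :=
      TopologicalSpace.exists_countable_dense (Lp ℂ p (volume.restrict (Set.Ioi (0:ℝ))))
    have hsne : s.Nonempty := hsd.nonempty
    obtain ⟨v, hv⟩ := Set.Countable.exists_eq_range hsc hsne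
    set G : ℕ × ℕ → Set (Lp ℂ p (volume.restrict (Set.Ioi (0:ℝ)))) := fun kj =>
      ⋃ n : ℕ, (fun z => (T ^ n) z) ⁻¹' (Metric.ball (v kj.1) (1/((kj.2:ℝ)+1))) with hGdef
    have hGopen : ∀ kj, IsOpen (G kj) := by
      intro kj
      exact isOpen_iUnion fun n => Metric.isOpen_ball.preimage (T ^ n).continuous
    have hGdense : ∀ kj, Dense (G kj) := by
      rintro ⟨k, j⟩
      rw [Metric.dense_iff]
      intro x r hr
      set δ : ℝ := 1/((j:ℝ)+1) with hδdef
      have hδpos : 0 < δ := by positivity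
      obtain ⟨u', K₁, hK₁0, huu', hu'supp⟩ := Chaos2.exists_truncation hp x (half_pos hr)
      obtain ⟨v', K₂, hK₂0, hvv', hv'supp⟩ :=
        Chaos2.exists_truncation hp (v k) (half_pos hδpos)
      set δ₂ : ℝ := min (r/2) (δ/2) / (‖v'‖ + 1) with hδ₂def
      have hδ₂pos : 0 < δ₂ := by
        apply div_pos (lt_min (half_pos hr) (half_pos hδpos))
        positivity
      obtain ⟨N, hN1, hN2, hN3⟩ := hchoose (max K₁ K₂) δ₂ hδ₂pos
      set q : ℝ := m⁻¹ ^ N with hqdef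
      have hq0 : 0 ≤ q := pow_nonneg hminv0 N
      set z := u' + (S ^ N) v' with hzdef
      have hSNv' : ‖(S ^ N) v'‖ < min (r/2) (δ/2) := by
        have h1 : ‖(S ^ N) v'‖ ≤ q * ‖v'‖ :=
          le_trans ((S ^ N).le_opNorm v')
            (mul_le_mul_of_nonneg_right (hSn N hN1) (norm_nonneg v'))
        have hpos : (0:ℝ) < ‖v'‖ + 1 := by positivity
        calc ‖(S ^ N) v'‖ ≤ q * ‖v'‖ := h1
          _ ≤ q * (‖v'‖ + 1) := by nlinarith
          _ < δ₂ * (‖v'‖ + 1) := mul_lt_mul_of_pos_right hN3 hpos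
          _ = min (r/2) (δ/2) := by rw [hδ₂def]; field_simp
      have hTNz : (T ^ N) z = v' := by
        have h1 : (T ^ N) u' = 0 :=
          hkey u' K₁ hu'supp N hN1 (le_trans (le_max_left _ _) hN2)
        calc (T ^ N) z = (T ^ N) u' + (T ^ N) ((S ^ N) v') := by rw [hzdef, map_add]
          _ = 0 + (T ^ N * S ^ N) v' := by rw [h1, ContinuousLinearMap.mul_apply]
          _ = v' := by rw [hTSn N, zero_add, ContinuousLinearMap.one_apply]
      refine ⟨z, Metric.mem_ball.mpr ?_, ?_⟩
      · rw [dist_eq_norm]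
        have : z - x = (u' - x) + (S ^ N) v' := by rw [hzdef]; abel
        rw [this]
        have h8 : ‖u' - x‖ < r/2 := by rw [norm_sub_rev]; exact huu'
        calc ‖(u' - x) + (S ^ N) v'‖ ≤ ‖u' - x‖ + ‖(S ^ N) v'‖ := norm_add_le _ _
          _ < r/2 + r/2 := add_lt_add h8 (lt_of_lt_of_le hSNv' (min_le_left _ _))
          _ = r := by ring
      · rw [hGdef]
        apply Set.mem_iUnion.mpr
        refine ⟨N, ?_⟩
        simp only [Set.mem_preimage, Metric.mem_ball]
        rw [hTNz, dist_eq_norm]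
        have h9 : ‖v' - v k‖ < δ/2 := by rw [norm_sub_rev]; exact hvv'
        calc ‖v' - v k‖ < δ/2 := h9
          _ < δ := by linarith
    have hdense := dense_iInter_of_isOpen hGopen hGdense
    obtain ⟨x, hx⟩ := hdense.nonempty
    refine ⟨x, ?_⟩
    rw [Metric.dense_iff]
    intro z r hr
    obtain ⟨y, hy1, hy2⟩ := (Metric.dense_iff.mp hsd) z (r/2) (half_pos hr)
    rw [hv] at hy2
    obtain ⟨k, hk⟩ := hy2
    obtain ⟨j, hj⟩ := exists_nat_one_div_lt (half_pos hr)
    have hxG := Set.mem_iInter.mp hx (k, j)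
    rw [hGdef] at hxG
    obtain ⟨n, hn⟩ := Set.mem_iUnion.mp hxG
    simp only [Set.mem_preimage, Metric.mem_ball] at hn
    refine ⟨(T ^ n) x, Metric.mem_ball.mpr ?_, ⟨n, rfl⟩⟩
    have hd1 : dist ((T ^ n) x) z ≤ dist ((T ^ n) x) (v k) + dist (v k) z := dist_triangle _ _ _
    have hd2 : dist (v k) z < r/2 := by
      rw [← hk] at hy1
      exact Metric.mem_ball.mp hy1
    have hd3 : (1:ℝ)/((j:ℝ)+1) < r/2 := hj
    calc dist ((T ^ n) x) z ≤ dist ((T ^ n) x) (v k) + dist (v k) z := hd1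
      _ < 1/((j:ℝ)+1) + r/2 := add_lt_add hn hd2
      _ < r/2 + r/2 := by linarith
      _ = r := by ring
end

section
/- For every N ∈ ℕ and every x ∈ L^p(0,Na), the function x_N defined piecewise by x_N(t) = x(t−kNa) / ∏_{i=1}^{kN} w(t−ia) for t ∈ [kNa, (k+1)Na), k ∈ ℤ_+, belongs to L^p(0,∞) and satisfies T^N x_N = x_N, i.e. x_N is a periodic point of T of period N. -/
open MeasureTheory Filter Set
open scoped ENNReal NNReal

lemma aux_floor_mem {L t : ℝ} (hL : 0 < L) (ht : 0 ≤ t) :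
    ((⌊t / L⌋.toNat : ℝ)) * L ≤ t ∧ t < ((⌊t / L⌋.toNat : ℝ) + 1) * L := by
  have h0 : (0:ℤ) ≤ ⌊t / L⌋ := Int.floor_nonneg.2 (div_nonneg ht hL.le)
  have hc : ((⌊t / L⌋.toNat : ℝ)) = (⌊t / L⌋ : ℝ) := by
    exact_mod_cast congrArg (Int.cast : ℤ → ℝ) (Int.toNat_of_nonneg h0)
  constructor
  · rw [hc]
    have := Int.floor_le (t / L)
    calc (⌊t / L⌋ : ℝ) * L ≤ (t / L) * L := by nlinarith
    _ = t := by field_simp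
  · rw [hc]
    have := Int.lt_floor_add_one (t / L)
    have h2 : t / L * L < ((⌊t / L⌋ : ℝ) + 1) * L := by nlinarith
    calc t = t / L * L := by field_simp
    _ < _ := h2

lemma aux_floor_eq {L t : ℝ} (hL : 0 < L) {k : ℕ} (h1 : (k:ℝ) * L ≤ t)
    (h2 : t < ((k:ℝ) + 1) * L) : ⌊t / L⌋.toNat = k := by
  have : ⌊t / L⌋ = (k : ℤ) := by
    rw [Int.floor_eq_iff]
    constructor
    · push_cast
      rw [le_div_iff₀ hL]; linarith
    · push_cast
      rw [div_lt_iff₀ hL]; linarith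
  simp [this]

lemma aux_prod_Icc {M : Type*} [CommMonoid M] (f : ℕ → M) (n : ℕ) :
    ∏ i ∈ Finset.Icc 1 n, f i = ∏ i ∈ Finset.range n, f (1 + i) := by
  rw [← Finset.Ico_add_one_right_eq_Icc, Finset.prod_Ico_eq_prod_range]
  simp

lemma aux_prod_split (w : ℝ → ℂ) (a t : ℝ) (N k : ℕ) :
    ∏ i ∈ Finset.Icc 1 ((k + 1) * N), w (t + N * a - i * a)
      = (∏ i ∈ Finset.range N, w (t + i * a)) *
        ∏ i ∈ Finset.Icc 1 (k * N), w (t - i * a) := by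
  rw [aux_prod_Icc, aux_prod_Icc]
  have hkN : (k + 1) * N = N + k * N := by ring
  rw [hkN, Finset.prod_range_add]
  congr 1
  · rw [← Finset.prod_range_reflect]
    apply Finset.prod_congr rfl
    intro j hj
    simp only [Finset.mem_range] at hj
    congr 1
    have h3 : 1 + (N - 1 - j) = N - j := by omega
    rw [h3, Nat.cast_sub (by omega : j ≤ N)]
    ring
  · apply Finset.prod_congr rfl
    intro j hj
    congr 1
    push_cast
    ring

lemma aux_shift (F : ℝ → ℝ≥0∞) (L c : ℝ) :
    ∫⁻ t in Ico c (L + c), F (t - c) ∂volume = ∫⁻ s in Ico 0 L, F s ∂volume := by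
  rw [← lintegral_indicator measurableSet_Ico, ← lintegral_indicator measurableSet_Ico]
  have h : ∀ t : ℝ, (Ico c (L + c)).indicator (fun u => F (u - c)) t
      = (Ico (0:ℝ) L).indicator F (t - c) := by
    intro t
    rw [← Set.indicator_comp_right (fun u : ℝ => u - c) (g := F)]
    have : (fun u : ℝ => u - c) ⁻¹' Ico (0:ℝ) L = Ico c (L + c) := by
      rw [preimage_sub_const_Ico, zero_add]
    rw [this]
    rfl
  simp_rw [h]
  exact lintegral_sub_right_eq_self ((Ico (0:ℝ) L).indicator F) c

/-- for every `N ≥ 1` and `x ∈ L^p(0,Na)`, the function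
`x_N(t) = x(t−kNa) / ∏_{i=1}^{kN} w(t−ia)` for `t ∈ [kNa,(k+1)Na)` belongs to
`L^p(0,∞)` and satisfies `T^N x_N = x_N`, i.e. it is a periodic point of
`(Tx)(t) = w(t)x(t+a)` of period `N`. -/
theorem stmt3 (p : ENNReal) [Fact (1 ≤ p)] (hp : p ≠ ⊤) (a : ℝ) (ha : 0 < a)
    (w : ℝ → ℂ) (m C : ℝ) (hm : 1 < m) (hwm : ∀ t : ℝ, m ≤ ‖w t‖)
    (hwC : ∀ t : ℝ, ‖w t‖ ≤ C) (hw : Measurable w)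
    (N : ℕ) (hN : 1 ≤ N) (x : ℝ → ℂ)
    (hx : MemLp x p (volume.restrict (Set.Ioo (0:ℝ) (N * a))))
    (xN : ℝ → ℂ)
    (hxN : ∀ t : ℝ, 0 ≤ t →
      xN t = x (t - (⌊t / (N * a)⌋).toNat * (N * a)) /
        ∏ i ∈ Finset.Icc 1 ((⌊t / (N * a)⌋).toNat * N), w (t - i * a)) :
    MemLp xN p (volume.restrict (Set.Ioi (0:ℝ))) ∧
      (fun t => (∏ i ∈ Finset.range N, w (t + i * a)) * xN (t + N * a))
        =ᵐ[volume.restrict (Set.Ioi (0:ℝ))] xN := by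
  have hp0 : p ≠ 0 := by
    have h1 : (1:ℝ≥0∞) ≤ p := Fact.out
    intro h; rw [h] at h1; simp at h1
  set q : ℝ := p.toReal with hqdef
  have hq : 0 < q := ENNReal.toReal_pos hp0 hp
  have hm0 : (0:ℝ) < m := by linarith
  have hw0 : ∀ s, w s ≠ 0 := by
    intro s h
    have := hwm s; rw [h, norm_zero] at this; linarith
  set L : ℝ := (N:ℝ) * a with hLdef
  have hL : 0 < L := by
    have : (1:ℝ) ≤ (N:ℝ) := by exact_mod_cast hN
    rw [hLdef]; nlinarith
  -- Part 2
  have part2 : (fun t => (∏ i ∈ Finset.range N, w (t + i * a)) * xN (t + L))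
        =ᵐ[volume.restrict (Set.Ioi (0:ℝ))] xN := by
    filter_upwards [ae_restrict_mem measurableSet_Ioi] with t ht
    have ht0 : (0:ℝ) ≤ t := le_of_lt ht
    have hfloor : ⌊(t + L) / L⌋.toNat = ⌊t / L⌋.toNat + 1 := by
      have h1 : (t + L) / L = t / L + 1 := by field_simp
      have h2 : ⌊(t + L) / L⌋ = ⌊t / L⌋ + 1 := by
        rw [h1]; exact_mod_cast Int.floor_add_intCast (t / L) 1
      have h0 : 0 ≤ ⌊t / L⌋ := Int.floor_nonneg.2 (div_nonneg ht0 hL.le)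
      omega
    rw [hxN t ht0, hxN (t + L) (by positivity), hfloor]
    set k : ℕ := ⌊t / L⌋.toNat with hk
    have harg : t + L - ((k + 1 : ℕ) : ℝ) * L = t - (k : ℝ) * L := by push_cast; ring
    rw [harg]
    have hsplit := aux_prod_split w a t N k
    rw [← hLdef] at hsplit
    rw [hsplit]
    have hA : (∏ i ∈ Finset.range N, w (t + (i:ℝ) * a)) ≠ 0 :=
      Finset.prod_ne_zero_iff.2 fun i _ => hw0 _
    have hB : (∏ i ∈ Finset.Icc 1 (k * N), w (t - (i:ℝ) * a)) ≠ 0 :=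
      Finset.prod_ne_zero_iff.2 fun i _ => hw0 _
    rw [← mul_div_assoc, mul_div_mul_left _ _ hA]
  -- measurable representative
  have hxsm := hx.aestronglyMeasurable
  set x' : ℝ → ℂ := hxsm.mk x with hx'def
  have hx'm : Measurable x' := hxsm.stronglyMeasurable_mk.measurable
  have hxeq : x =ᵐ[volume.restrict (Ioo (0:ℝ) L)] x' := hxsm.ae_eq_mk
  set g : ℝ → ℂ := fun t => x' (t - (⌊t / L⌋).toNat * L) /
      ∏ i ∈ Finset.Icc 1 ((⌊t / L⌋).toNat * N), w (t - i * a) with hgdef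
  have hgm : Measurable g := by
    have h1 : Measurable (fun pr : ℝ × ℕ => x' (pr.1 - pr.2 * L) /
        ∏ i ∈ Finset.Icc 1 (pr.2 * N), w (pr.1 - i * a)) := by
      apply measurable_from_prod_countable_left
      intro n
      have hnum : Measurable fun t : ℝ => x' (t - (n:ℝ) * L) :=
        hx'm.comp (measurable_id.sub_const _)
      have hden : Measurable fun t : ℝ =>
          ∏ i ∈ Finset.Icc 1 (n * N), w (t - (i:ℝ) * a) :=
        Finset.measurable_prod _ fun i _ => hw.comp (measurable_id.sub_const _)
      exact hnum.div hden
    have h2 : Measurable (fun t : ℝ => (t, ⌊t / L⌋.toNat)) :=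
      measurable_id.prodMk ((measurable_of_countable Int.toNat).comp
        (Int.measurable_floor.comp (measurable_id.div_const L)))
    exact h1.comp h2
  -- a.e. equality of xN and g on Ioi 0
  have hB0 : volume ({s : ℝ | ¬ x s = x' s} ∩ Ioo 0 L) = 0 := by
    have h := hxeq
    rw [Filter.EventuallyEq, ae_iff] at h
    rwa [Measure.restrict_apply' measurableSet_Ioo] at h
  set D : Set ℝ := ⋃ k : ℕ, ((fun s => s + (k:ℝ) * L) ''
      ({s : ℝ | ¬ x s = x' s} ∩ Ioo 0 L) ∪ {(k:ℝ) * L}) with hDdef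
  have hD : volume D = 0 := by
    apply measure_iUnion_null; intro k
    apply measure_union_null _ (measure_singleton _)
    have himg : (fun s : ℝ => s + (k:ℝ) * L) '' ({s : ℝ | ¬ x s = x' s} ∩ Ioo 0 L)
        = (fun s : ℝ => s + (-((k:ℝ) * L))) ⁻¹' ({s : ℝ | ¬ x s = x' s} ∩ Ioo 0 L) := by
      ext u
      simp only [Set.mem_image, Set.mem_preimage]
      constructor
      · rintro ⟨s, hs, rfl⟩; simpa using hs
      · intro hu; exact ⟨u + -((k:ℝ) * L), hu, by ring⟩
    rw [himg, measure_preimage_add_right]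
    exact hB0
  have hae : xN =ᵐ[volume.restrict (Ioi (0:ℝ))] g := by
    have hDae : ∀ᵐ t ∂volume.restrict (Ioi (0:ℝ)), t ∉ D :=
      ae_mono Measure.restrict_le_self (measure_eq_zero_iff_ae_notMem.1 hD)
    filter_upwards [hDae, ae_restrict_mem measurableSet_Ioi] with t htD ht
    have ht0 : (0:ℝ) ≤ t := le_of_lt ht
    obtain ⟨hlo, hhi⟩ := aux_floor_mem hL ht0
    set k : ℕ := ⌊t / L⌋.toNat with hk
    have hs0 : 0 ≤ t - (k:ℝ) * L := by linarith
    have hsL : t - (k:ℝ) * L < L := by nlinarith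
    have hne : t - (k:ℝ) * L ≠ 0 := by
      intro h
      apply htD
      refine mem_iUnion.2 ⟨k, Or.inr ?_⟩
      simp only [Set.mem_singleton_iff]
      linarith [sub_eq_zero.1 h]
    have hxx' : x (t - (k:ℝ) * L) = x' (t - (k:ℝ) * L) := by
      by_contra hcon
      apply htD
      refine mem_iUnion.2 ⟨k, Or.inl ⟨t - (k:ℝ) * L, ⟨hcon, lt_of_le_of_ne hs0 (Ne.symm hne), hsL⟩, by ring⟩⟩
    rw [hxN t ht0, hgdef]
    simp only
    rw [hxx']
  -- MemLp of g
  have hx'mem : MemLp x' p (volume.restrict (Ioo (0:ℝ) L)) := hx.ae_eq hxeq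
  have hI : ∫⁻ s in Ioo (0:ℝ) L, (‖x' s‖₊ : ℝ≥0∞) ^ q ∂volume < ∞ :=
    lintegral_rpow_enorm_lt_top_of_eLpNorm_lt_top hp0 hp hx'mem.2
  have hIco : ∫⁻ s in Ico (0:ℝ) L, (‖x' s‖₊ : ℝ≥0∞) ^ q ∂volume < ∞ := by
    rwa [Measure.restrict_congr_set Ioo_ae_eq_Ico] at hI
  set b : ℝ := ((m:ℝ) ^ N)⁻¹ with hbdef
  have hmN : 1 < (m:ℝ) ^ N := one_lt_pow₀ hm (by omega)
  have hb0 : 0 < b := by positivity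
  have hb1 : b < 1 := by
    rw [hbdef]
    exact inv_lt_one_of_one_lt₀ hmN
  set ρ : ℝ≥0∞ := ENNReal.ofReal b ^ q with hρdef
  have hρ1 : ρ < 1 := ENNReal.rpow_lt_one (ENNReal.ofReal_lt_one.2 hb1) hq
  have hρtop : ∀ k : ℕ, ρ ^ k ≠ ∞ := fun k =>
    ENNReal.pow_ne_top (by
      rw [hρdef]
      exact (ENNReal.rpow_lt_top_of_nonneg hq.le ENNReal.ofReal_ne_top).ne)
  -- pointwise bound on each interval
  have hbound : ∀ (k : ℕ) (t : ℝ), t ∈ Ico ((k:ℝ) * L) (((k:ℝ) + 1) * L) →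
      (‖g t‖₊ : ℝ≥0∞) ^ q ≤ ρ ^ k * (‖x' (t - (k:ℝ) * L)‖₊ : ℝ≥0∞) ^ q := by
    intro k t htk
    have hfl : ⌊t / L⌋.toNat = k := aux_floor_eq hL htk.1 htk.2
    have hgt : g t = x' (t - (k:ℝ) * L) / ∏ i ∈ Finset.Icc 1 (k * N), w (t - (i:ℝ) * a) := by
      rw [hgdef]; simp only [hfl]
    have hPnorm : ((m:ℝ) ^ N) ^ k ≤ ‖∏ i ∈ Finset.Icc 1 (k * N), w (t - (i:ℝ) * a)‖ := by
      rw [norm_prod]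
      calc ((m:ℝ) ^ N) ^ k = m ^ (k * N) := by rw [← pow_mul, mul_comm]
      _ = ∏ _i ∈ Finset.Icc 1 (k * N), m := by
          rw [Finset.prod_const, Nat.card_Icc]; simp
      _ ≤ _ := Finset.prod_le_prod (fun _ _ => hm0.le) (fun i _ => hwm _)
    have hreal : ‖g t‖ ≤ ‖x' (t - (k:ℝ) * L)‖ * b ^ k := by
      rw [hgt, norm_div]
      have h1 : ‖x' (t - (k:ℝ) * L)‖ / ‖∏ i ∈ Finset.Icc 1 (k * N), w (t - (i:ℝ) * a)‖
          ≤ ‖x' (t - (k:ℝ) * L)‖ / ((m:ℝ) ^ N) ^ k := by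
        gcongr
      refine h1.trans_eq ?_
      rw [div_eq_mul_inv, hbdef, ← inv_pow]
    have h1 : (‖g t‖₊ : ℝ≥0∞) ≤ (‖x' (t - (k:ℝ) * L)‖₊ : ℝ≥0∞) * ENNReal.ofReal b ^ k := by
      rw [← enorm_eq_nnnorm, ← enorm_eq_nnnorm, ← ofReal_norm, ← ofReal_norm,
        ← ENNReal.ofReal_pow hb0.le, ← ENNReal.ofReal_mul (norm_nonneg _)]
      exact ENNReal.ofReal_le_ofReal hreal
    calc (‖g t‖₊ : ℝ≥0∞) ^ q
        ≤ ((‖x' (t - (k:ℝ) * L)‖₊ : ℝ≥0∞) * ENNReal.ofReal b ^ k) ^ q :=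
          ENNReal.rpow_le_rpow h1 hq.le
    _ = (‖x' (t - (k:ℝ) * L)‖₊ : ℝ≥0∞) ^ q * (ENNReal.ofReal b ^ k) ^ q :=
          ENNReal.mul_rpow_of_nonneg _ _ hq.le
    _ = ρ ^ k * (‖x' (t - (k:ℝ) * L)‖₊ : ℝ≥0∞) ^ q := by
          rw [mul_comm]
          congr 1
          rw [hρdef, ← ENNReal.rpow_natCast (ENNReal.ofReal b) k, ← ENNReal.rpow_mul,
            mul_comm, ENNReal.rpow_mul, ENNReal.rpow_natCast]
  -- per-interval integral bound
  have hper : ∀ k : ℕ, ∫⁻ t in Ico ((k:ℝ) * L) (((k:ℝ) + 1) * L), (‖g t‖₊ : ℝ≥0∞) ^ q ∂volume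
      ≤ ρ ^ k * ∫⁻ s in Ico (0:ℝ) L, (‖x' s‖₊ : ℝ≥0∞) ^ q ∂volume := by
    intro k
    have h1 : ∫⁻ t in Ico ((k:ℝ) * L) (((k:ℝ) + 1) * L), (‖g t‖₊ : ℝ≥0∞) ^ q ∂volume
        ≤ ∫⁻ t in Ico ((k:ℝ) * L) (((k:ℝ) + 1) * L),
            ρ ^ k * (‖x' (t - (k:ℝ) * L)‖₊ : ℝ≥0∞) ^ q ∂volume :=
      setLIntegral_mono' measurableSet_Ico (hbound k)
    refine h1.trans ?_
    rw [lintegral_const_mul' _ _ (hρtop k)]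
    have h2 : ∫⁻ t in Ico ((k:ℝ) * L) (((k:ℝ) + 1) * L),
          (‖x' (t - (k:ℝ) * L)‖₊ : ℝ≥0∞) ^ q ∂volume
        = ∫⁻ s in Ico (0:ℝ) L, (‖x' s‖₊ : ℝ≥0∞) ^ q ∂volume := by
      have hset : Ico ((k:ℝ) * L) (((k:ℝ) + 1) * L) = Ico ((k:ℝ) * L) (L + (k:ℝ) * L) := by
        congr 1; ring
      rw [hset]
      exact aux_shift (fun s => (‖x' s‖₊ : ℝ≥0∞) ^ q) L ((k:ℝ) * L)
    rw [h2]
  -- putting it together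
  have hsub : Ioi (0:ℝ) ⊆ ⋃ k : ℕ, Ico ((k:ℝ) * L) (((k:ℝ) + 1) * L) := by
    intro t ht
    obtain ⟨h1, h2⟩ := aux_floor_mem hL (le_of_lt ht)
    exact mem_iUnion.2 ⟨⌊t / L⌋.toNat, h1, h2⟩
  have hfin : ∫⁻ t in Ioi (0:ℝ), (‖g t‖₊ : ℝ≥0∞) ^ q ∂volume < ∞ := by
    calc ∫⁻ t in Ioi (0:ℝ), (‖g t‖₊ : ℝ≥0∞) ^ q ∂volume
        ≤ ∫⁻ t in ⋃ k : ℕ, Ico ((k:ℝ) * L) (((k:ℝ) + 1) * L),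
            (‖g t‖₊ : ℝ≥0∞) ^ q ∂volume := lintegral_mono_set hsub
    _ ≤ ∑' k : ℕ, ∫⁻ t in Ico ((k:ℝ) * L) (((k:ℝ) + 1) * L),
            (‖g t‖₊ : ℝ≥0∞) ^ q ∂volume := lintegral_iUnion_le _ _
    _ ≤ ∑' k : ℕ, ρ ^ k * ∫⁻ s in Ico (0:ℝ) L, (‖x' s‖₊ : ℝ≥0∞) ^ q ∂volume :=
          ENNReal.tsum_le_tsum hper
    _ = (∑' k : ℕ, ρ ^ k) * ∫⁻ s in Ico (0:ℝ) L, (‖x' s‖₊ : ℝ≥0∞) ^ q ∂volume :=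
          ENNReal.tsum_mul_right
    _ < ∞ := by
          apply ENNReal.mul_lt_top _ hIco
          rw [ENNReal.tsum_geometric]
          exact ENNReal.inv_lt_top.2 (tsub_pos_of_lt hρ1)
  have hgmem : MemLp g p (volume.restrict (Ioi (0:ℝ))) := by
    constructor
    · exact hgm.aestronglyMeasurable
    · rw [eLpNorm_lt_top_iff_lintegral_rpow_enorm_lt_top hp0 hp]
      exact hfin
  exact ⟨hgmem.ae_eq hae.symm, part2⟩
end

section
/- Every eigenvalue λ of T satisfies |λ| < ‖w‖_∞, i.e. the point spectrum σ_p(T) is contained in the open disc {λ ∈ ℂ : |λ| < ‖w‖_∞}. -/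
open MeasureTheory Filter Set

/-- every eigenvalue `λ` of the bounded operator
`(Tx)(t) = w(t)x(t+a)` on `L^p(0,∞)` satisfies `|λ| < ‖w‖_∞`, i.e. the point
spectrum is contained in the open disc of radius `‖w‖_∞`. -/
theorem stmt5 (p : ENNReal) [Fact (1 ≤ p)] (hp : p ≠ ⊤) (a : ℝ) (ha : 0 < a)
    (w : ℝ → ℂ) (m C : ℝ) (hm : 1 < m) (hwm : ∀ t : ℝ, 0 < t → m ≤ ‖w t‖)
    (hwC : ∀ t : ℝ, 0 < t → ‖w t‖ ≤ C)
    (hw : AEStronglyMeasurable w (volume.restrict (Set.Ioi (0:ℝ))))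
    (hwbdd : eLpNormEssSup w (volume.restrict (Set.Ioi (0:ℝ))) ≠ ⊤)
    (T : Lp ℂ p (volume.restrict (Set.Ioi (0:ℝ))) →L[ℂ]
         Lp ℂ p (volume.restrict (Set.Ioi (0:ℝ))))
    (hT : ∀ x : Lp ℂ p (volume.restrict (Set.Ioi (0:ℝ))),
      (T x : ℝ → ℂ) =ᵐ[volume.restrict (Set.Ioi (0:ℝ))] fun t => w t * x (t + a)) :
    ∀ (l : ℂ) (x : Lp ℂ p (volume.restrict (Set.Ioi (0:ℝ)))),
      x ≠ 0 → T x = l • x →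
        ‖l‖ < (eLpNormEssSup w (volume.restrict (Set.Ioi (0:ℝ)))).toReal := by
  intro l x hx hTx
  by_contra hcon
  push_neg at hcon
  apply hx
  have hp0 : p ≠ 0 := by
    have h1 : (1:ENNReal) ≤ p := Fact.out
    intro h; rw [h] at h1; simp at h1
  have hq : 0 < p.toReal := ENNReal.toReal_pos hp0 hp
  -- a.e. facts
  have h_ae_mem : ∀ᵐ t ∂(volume.restrict (Set.Ioi (0:ℝ))), t ∈ Set.Ioi (0:ℝ) :=
    ae_restrict_mem measurableSet_Ioi
  have h_ae_w_le : ∀ᵐ t ∂(volume.restrict (Set.Ioi (0:ℝ))),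
      (‖w t‖₊ : ENNReal) ≤ eLpNormEssSup w (volume.restrict (Set.Ioi (0:ℝ))) :=
    enorm_ae_le_eLpNormEssSup w _
  -- lower bound on the essential supremum
  have hmW : ENNReal.ofReal m ≤ eLpNormEssSup w (volume.restrict (Set.Ioi (0:ℝ))) := by
    by_contra h
    push_neg at h
    have hFalse : ∀ᵐ t ∂(volume.restrict (Set.Ioi (0:ℝ))), False := by
      filter_upwards [h_ae_mem, h_ae_w_le] with t ht hle
      have h1 : ENNReal.ofReal m ≤ (‖w t‖₊ : ENNReal) := by
        rw [← ENNReal.ofReal_coe_nnreal, coe_nnnorm]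
        exact ENNReal.ofReal_le_ofReal (hwm t ht)
      exact absurd (h1.trans hle) (not_le.mpr h)
    have hne : volume.restrict (Set.Ioi (0:ℝ)) ≠ 0 := by
      intro h0
      rw [Measure.restrict_eq_zero] at h0
      simp [Real.volume_Ioi] at h0
    rw [ae_iff] at hFalse
    simp only [not_false_iff] at hFalse
    exact hne (by simpa using hFalse)
  have hWtoReal : m ≤ (eLpNormEssSup w (volume.restrict (Set.Ioi (0:ℝ)))).toReal := by
    have := ENNReal.toReal_mono hwbdd hmW
    rwa [ENNReal.toReal_ofReal (by linarith : (0:ℝ) ≤ m)] at this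
  have hl_pos : 0 < ‖l‖ := by linarith
  -- the key a.e. monotonicity
  have hTx' : (T x : ℝ → ℂ) =ᵐ[volume.restrict (Set.Ioi (0:ℝ))]
      fun t => l * (x : ℝ → ℂ) t := by
    rw [hTx]
    filter_upwards [Lp.coeFn_smul l x] with t ht
    simpa using ht
  have key : ∀ᵐ t ∂(volume.restrict (Set.Ioi (0:ℝ))),
      ‖(x : ℝ → ℂ) t‖ ≤ ‖(x : ℝ → ℂ) (t + a)‖ := by
    filter_upwards [hT x, hTx', h_ae_w_le] with t h1 h2 h3
    have heq : l * (x : ℝ → ℂ) t = w t * (x : ℝ → ℂ) (t + a) := by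
      rw [← h2, h1]
    have hwt : ‖w t‖ ≤ ‖l‖ := by
      have h4 : ‖w t‖ ≤ (eLpNormEssSup w (volume.restrict (Set.Ioi (0:ℝ)))).toReal := by
        have := ENNReal.toReal_mono hwbdd h3
        simpa using this
      linarith
    have h5 := congrArg norm heq
    rw [norm_mul, norm_mul] at h5
    nlinarith [norm_nonneg ((x : ℝ → ℂ) (t + a)), norm_nonneg ((x : ℝ → ℂ) t)]
  -- indicator function
  set G : ℝ → ENNReal :=
    (Set.Ioi (0:ℝ)).indicator (fun t => (‖(x : ℝ → ℂ) t‖₊ : ENNReal) ^ p.toReal) with hGdef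
  have hmono : ∀ᵐ t ∂(volume : Measure ℝ), G t ≤ G (t + a) := by
    have h' : ∀ᵐ t ∂(volume : Measure ℝ), t ∈ Set.Ioi (0:ℝ) →
        ‖(x : ℝ → ℂ) t‖ ≤ ‖(x : ℝ → ℂ) (t + a)‖ :=
      (ae_restrict_iff' measurableSet_Ioi).mp key
    filter_upwards [h'] with t ht
    by_cases h0 : t ∈ Set.Ioi (0:ℝ)
    · have h0' : t + a ∈ Set.Ioi (0:ℝ) := by
        simp only [Set.mem_Ioi] at h0 ⊢; linarith
      rw [hGdef, Set.indicator_of_mem h0, Set.indicator_of_mem h0']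
      refine ENNReal.rpow_le_rpow ?_ hq.le
      rw [ENNReal.coe_le_coe]
      exact_mod_cast ht h0
    · rw [hGdef, Set.indicator_of_notMem h0]
      exact zero_le
  have hmono_n : ∀ n : ℕ, ∀ᵐ t ∂(volume : Measure ℝ),
      G (t + n * a) ≤ G (t + (n + 1) * a) := by
    intro n
    have hqmp :=
      (measurePreserving_add_right (volume : Measure ℝ) ((n : ℝ) * a)).quasiMeasurePreserving
    have h2 := hqmp.tendsto_ae.eventually hmono
    filter_upwards [h2] with t ht
    have heq : t + (n : ℝ) * a + a = t + ((n : ℝ) + 1) * a := by ring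
    simpa [heq] using ht
  have hchain : ∀ n : ℕ, ∀ᵐ t ∂(volume : Measure ℝ), G t ≤ G (t + n * a) := by
    have hall : ∀ᵐ t ∂(volume : Measure ℝ), ∀ n : ℕ,
        G (t + n * a) ≤ G (t + (n + 1) * a) := ae_all_iff.mpr hmono_n
    intro n
    filter_upwards [hall] with t ht
    induction n with
    | zero => simp
    | succ k ih =>
      refine ih.trans ?_
      have h6 := ht k
      have hc : ((k : ℝ) + 1) = ((k + 1 : ℕ) : ℝ) := by push_cast; ring
      rwa [hc] at h6
  -- integral facts
  have hI_eq : (∫⁻ t in Set.Ioi (0:ℝ), G t ∂(volume : Measure ℝ))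
      = ∫⁻ t, (‖(x : ℝ → ℂ) t‖₊ : ENNReal) ^ p.toReal
          ∂(volume.restrict (Set.Ioi (0:ℝ))) := by
    rw [hGdef]
    refine setLIntegral_congr_fun_ae measurableSet_Ioi (ae_of_all _ fun t ht => ?_)
    exact Set.indicator_of_mem ht _
  have hI_lt_top : (∫⁻ t in Set.Ioi (0:ℝ), G t ∂(volume : Measure ℝ)) < ⊤ := by
    rw [hI_eq]
    exact (eLpNorm_lt_top_iff_lintegral_rpow_enorm_lt_top hp0 hp).mp (Lp.eLpNorm_lt_top x)
  -- shift identity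
  have hshift : ∀ c : ℝ, (∫⁻ t in Set.Ioi (0:ℝ), G (t + c) ∂(volume : Measure ℝ))
      = ∫⁻ s in Set.Ioi c, G s ∂(volume : Measure ℝ) := by
    intro c
    rw [← lintegral_indicator measurableSet_Ioi, ← lintegral_indicator measurableSet_Ioi]
    have hpt : ∀ t : ℝ, (Set.Ioi (0:ℝ)).indicator (fun t => G (t + c)) t
        = (Set.Ioi c).indicator G (t + c) := by
      intro t
      by_cases h : t ∈ Set.Ioi (0:ℝ)
      · rw [Set.indicator_of_mem h, Set.indicator_of_mem]
        simp only [Set.mem_Ioi] at h ⊢; linarith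
      · rw [Set.indicator_of_notMem h, Set.indicator_of_notMem]
        simp only [Set.mem_Ioi] at h ⊢; linarith
    simp_rw [hpt]
    exact lintegral_add_right_eq_self ((Set.Ioi c).indicator G) c
  -- for each n, the integral over (0, n*a] vanishes
  have hIoc : ∀ n : ℕ,
      (∫⁻ t in Set.Ioc (0:ℝ) (n * a), G t ∂(volume : Measure ℝ)) = 0 := by
    intro n
    have hc0 : (0:ℝ) ≤ (n : ℝ) * a := by positivity
    have h1 : (∫⁻ t in Set.Ioi (0:ℝ), G t ∂(volume : Measure ℝ))
        ≤ ∫⁻ t in Set.Ioi ((n : ℝ) * a), G t ∂(volume : Measure ℝ) := by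
      rw [← hshift ((n : ℝ) * a)]
      exact lintegral_mono_ae (ae_restrict_of_ae (hchain n))
    have htail_le : (∫⁻ t in Set.Ioi ((n : ℝ) * a), G t ∂(volume : Measure ℝ))
        ≤ ∫⁻ t in Set.Ioi (0:ℝ), G t ∂(volume : Measure ℝ) :=
      lintegral_mono_set (Set.Ioi_subset_Ioi hc0)
    have hdecomp : (∫⁻ t in Set.Ioi (0:ℝ), G t ∂(volume : Measure ℝ))
        = (∫⁻ t in Set.Ioc (0:ℝ) (n * a), G t ∂(volume : Measure ℝ))
          + ∫⁻ t in Set.Ioi ((n : ℝ) * a), G t ∂(volume : Measure ℝ) := by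
      rw [← Set.Ioc_union_Ioi_eq_Ioi hc0,
        Measure.restrict_union (Set.Ioc_disjoint_Ioi le_rfl) measurableSet_Ioi,
        lintegral_add_measure]
    have htail_eq : (∫⁻ t in Set.Ioi ((n : ℝ) * a), G t ∂(volume : Measure ℝ))
        = ∫⁻ t in Set.Ioi (0:ℝ), G t ∂(volume : Measure ℝ) :=
      le_antisymm htail_le h1
    rw [htail_eq] at hdecomp
    have h3 : (∫⁻ t in Set.Ioc (0:ℝ) (n * a), G t ∂(volume : Measure ℝ))
        + (∫⁻ t in Set.Ioi (0:ℝ), G t ∂(volume : Measure ℝ))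
        ≤ 0 + ∫⁻ t in Set.Ioi (0:ℝ), G t ∂(volume : Measure ℝ) := by
      rw [zero_add]; exact hdecomp.symm.le
    exact le_antisymm ((ENNReal.add_le_add_iff_right hI_lt_top.ne).mp h3) zero_le
  -- conclude the integral vanishes
  have hcover : Set.Ioi (0:ℝ) ⊆ ⋃ n : ℕ, Set.Ioc (0:ℝ) (n * a) := by
    intro t ht
    obtain ⟨n, hn⟩ := exists_nat_ge (t / a)
    refine Set.mem_iUnion.mpr ⟨n, ?_⟩
    simp only [Set.mem_Ioi] at ht
    exact ⟨ht, by rwa [div_le_iff₀ ha] at hn⟩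
  have hI0 : (∫⁻ t in Set.Ioi (0:ℝ), G t ∂(volume : Measure ℝ)) = 0 := by
    have h3 : (∫⁻ t in Set.Ioi (0:ℝ), G t ∂(volume : Measure ℝ))
        ≤ ∑' n : ℕ, ∫⁻ t in Set.Ioc (0:ℝ) (n * a), G t ∂(volume : Measure ℝ) :=
      (lintegral_mono_set hcover).trans (lintegral_iUnion_le _ _)
    simpa [hIoc] using h3
  -- x = 0
  have hsnorm : eLpNorm (x : ℝ → ℂ) p (volume.restrict (Set.Ioi (0:ℝ))) = 0 := by
    rw [eLpNorm_eq_lintegral_rpow_enorm_toReal hp0 hp]; simp only [enorm_eq_nnnorm]; rw [← hI_eq, hI0]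
    simp [hq, one_div, ENNReal.rpow_eq_zero_iff]
  have hnorm : ‖x‖ = 0 := by
    rw [Lp.norm_def, hsnorm, ENNReal.toReal_zero]
  exact (Lp.norm_eq_zero_iff (lt_of_lt_of_le zero_lt_one Fact.out)).mp hnorm
end

section
/- The map S defined on compactly supported p-integrable functions by (Sx)(t) = x(t−a)/w(t−a) for t > a and (Sx)(t) = 0 otherwise, maps compactly supported functions to compactly supported functions, satisfies TS = I, and satisfies ‖S^n x‖_p ≤ b^{−n}‖x‖_p → 0 as n → ∞ for every such x. -/
open MeasureTheory Filter Set

/-- The right-inverse map `S`: `(Sx)(t) = x(t−a)/w(t−a)` for `t > a`, `0` otherwise. -/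
noncomputable def Sshift (w : ℝ → ℝ) (a : ℝ) (x : ℝ → ℝ) : ℝ → ℝ :=
  fun t => if a < t then x (t - a) / w (t - a) else 0

lemma Sshift_eq_indicator (w : ℝ → ℝ) (a : ℝ) (x : ℝ → ℝ) :
    Sshift w a x = (Set.Ioi a).indicator (fun t => x (t - a) / w (t - a)) := by
  ext t
  simp [Sshift, Set.indicator_apply, Set.mem_Ioi]

lemma mp_sub (a : ℝ) : MeasurePreserving (fun t : ℝ => t - a)
    (volume.restrict (Set.Ioi a)) (volume.restrict (Set.Ioi (0:ℝ))) := by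
  have h := (measurePreserving_sub_right (volume : Measure ℝ) a).restrict_preimage
    (s := Set.Ioi (0:ℝ)) measurableSet_Ioi
  have hpre : (fun t : ℝ => t - a) ⁻¹' Set.Ioi 0 = Set.Ioi a := by
    ext t; simp [Set.mem_Ioi, sub_pos]
  rwa [hpre] at h

set_option maxHeartbeats 1000000 in
lemma key_step (p : ENNReal) (a : ℝ) (ha : 0 < a) (w : ℝ → ℝ) (hw : Measurable w)
    (b : ℝ) (hb0 : 0 < b) (hwb : ∀ t : ℝ, b ≤ |w t|) (x : ℝ → ℝ)
    (hxm : AEStronglyMeasurable x (volume.restrict (Set.Ioi (0:ℝ)))) :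
    AEStronglyMeasurable (Sshift w a x) (volume.restrict (Set.Ioi (0:ℝ))) ∧
    eLpNorm (Sshift w a x) p (volume.restrict (Set.Ioi (0:ℝ))) ≤
      ENNReal.ofReal b⁻¹ * eLpNorm x p (volume.restrict (Set.Ioi (0:ℝ))) := by
  have hmp := mp_sub a
  have hgm : AEStronglyMeasurable (fun t : ℝ => x (t - a) / w (t - a))
      (volume.restrict (Set.Ioi a)) := by
    have h1 : AEStronglyMeasurable (fun t : ℝ => x (t - a)) (volume.restrict (Set.Ioi a)) :=
      hxm.comp_measurePreserving hmp
    have h2 : AEStronglyMeasurable (fun t : ℝ => (w (t - a))⁻¹) (volume.restrict (Set.Ioi a)) :=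
      ((hw.comp (measurable_id.sub_const a)).inv).aestronglyMeasurable
    simpa only [div_eq_mul_inv] using (show AEStronglyMeasurable (fun t : ℝ => x (t - a) * (w (t - a))⁻¹) (volume.restrict (Set.Ioi a)) from h1.mul h2)
  constructor
  · rw [Sshift_eq_indicator]
    rw [aestronglyMeasurable_indicator_iff measurableSet_Ioi]
    rwa [Measure.restrict_restrict measurableSet_Ioi, Set.Ioi_inter_Ioi,
      max_eq_left ha.le]
  · calc eLpNorm (Sshift w a x) p (volume.restrict (Set.Ioi (0:ℝ)))
        ≤ eLpNorm (Sshift w a x) p volume := eLpNorm_mono_measure _ Measure.restrict_le_self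
      _ = eLpNorm (fun t : ℝ => x (t - a) / w (t - a)) p (volume.restrict (Set.Ioi a)) := by
          rw [Sshift_eq_indicator, eLpNorm_indicator_eq_eLpNorm_restrict measurableSet_Ioi]
      _ ≤ eLpNorm (fun t : ℝ => b⁻¹ • x (t - a)) p (volume.restrict (Set.Ioi a)) := by
          refine eLpNorm_mono fun t => ?_
          have hwt := hwb (t - a)
          have hwt0 : 0 < |w (t - a)| := lt_of_lt_of_le hb0 hwt
          rw [Real.norm_eq_abs, Real.norm_eq_abs, abs_div, smul_eq_mul, abs_mul,
            abs_inv, abs_of_pos hb0, div_eq_inv_mul]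
          gcongr
      _ = ENNReal.ofReal b⁻¹ * eLpNorm (fun t : ℝ => x (t - a)) p
            (volume.restrict (Set.Ioi a)) := by
          rw [show (fun t : ℝ => b⁻¹ • x (t - a)) = b⁻¹ • (fun t : ℝ => x (t - a)) from rfl,
            eLpNorm_const_smul]
          congr 1
          rw [← ofReal_norm_eq_enorm, Real.norm_eq_abs,
            abs_of_nonneg (by positivity)]
      _ = ENNReal.ofReal b⁻¹ * eLpNorm x p (volume.restrict (Set.Ioi (0:ℝ))) := by
          congr 1
          exact eLpNorm_comp_measurePreserving (p := p) hxm hmp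

/-- with `|w(t)| ≥ b > 1`, the map `S` sends compactly supported
`p`-integrable functions to compactly supported `p`-integrable functions, satisfies
`TS = I` (where `(Tx)(t) = w(t)x(t+a)`), and `‖S^n x‖_p ≤ b^{−n}‖x‖_p → 0`. -/
theorem stmt9 (p : ENNReal) [Fact (1 ≤ p)] (hp : p ≠ ⊤) (a : ℝ) (ha : 0 < a)
    (w : ℝ → ℝ) (hw : Measurable w) (b : ℝ) (hb : 1 < b)
    (hwb : ∀ t : ℝ, b ≤ |w t|)
    (x : ℝ → ℝ) (hx : MemLp x p (volume.restrict (Set.Ioi (0:ℝ))))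
    (hsupp : ∃ R : ℝ, ∀ t : ℝ, R ≤ t → x t = 0) :
    (∃ R' : ℝ, ∀ t : ℝ, R' ≤ t → Sshift w a x t = 0) ∧
    MemLp (Sshift w a x) p (volume.restrict (Set.Ioi (0:ℝ))) ∧
    (∀ t : ℝ, 0 < t → w t * Sshift w a x (t + a) = x t) ∧
    (∀ n : ℕ, eLpNorm ((Sshift w a)^[n] x) p (volume.restrict (Set.Ioi (0:ℝ))) ≤
      ENNReal.ofReal ((b ^ n)⁻¹) * eLpNorm x p (volume.restrict (Set.Ioi (0:ℝ)))) ∧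
    Tendsto (fun n : ℕ => eLpNorm ((Sshift w a)^[n] x) p
      (volume.restrict (Set.Ioi (0:ℝ)))) atTop (nhds 0) := by
  have hb0 : (0:ℝ) < b := lt_trans one_pos hb
  have hkey := key_step p a ha w hw b hb0 hwb
  -- induction on iterates
  have hiter : ∀ n : ℕ,
      AEStronglyMeasurable ((Sshift w a)^[n] x) (volume.restrict (Set.Ioi (0:ℝ))) ∧
      eLpNorm ((Sshift w a)^[n] x) p (volume.restrict (Set.Ioi (0:ℝ))) ≤
        (ENNReal.ofReal b⁻¹) ^ n * eLpNorm x p (volume.restrict (Set.Ioi (0:ℝ))) := by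
    intro n
    induction n with
    | zero =>
      simp only [Function.iterate_zero, id_eq, pow_zero, one_mul]
      exact ⟨hx.1, le_rfl⟩
    | succ n ih =>
      rw [Function.iterate_succ_apply']
      refine ⟨(hkey _ ih.1).1, ?_⟩
      calc eLpNorm (Sshift w a ((Sshift w a)^[n] x)) p (volume.restrict (Set.Ioi (0:ℝ)))
          ≤ ENNReal.ofReal b⁻¹ *
            eLpNorm ((Sshift w a)^[n] x) p (volume.restrict (Set.Ioi (0:ℝ))) :=
            (hkey _ ih.1).2
        _ ≤ ENNReal.ofReal b⁻¹ * ((ENNReal.ofReal b⁻¹) ^ n *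
              eLpNorm x p (volume.restrict (Set.Ioi (0:ℝ)))) := by
            gcongr
            exact ih.2
        _ = (ENNReal.ofReal b⁻¹) ^ (n + 1) *
              eLpNorm x p (volume.restrict (Set.Ioi (0:ℝ))) := by ring
  have hofReal : ∀ n : ℕ, (ENNReal.ofReal b⁻¹) ^ n = ENNReal.ofReal ((b ^ n)⁻¹) := by
    intro n
    rw [← ENNReal.ofReal_pow (by positivity), inv_pow]
  refine ⟨?_, ?_, ?_, ?_, ?_⟩
  · obtain ⟨R, hR⟩ := hsupp
    refine ⟨R + a, fun t ht => ?_⟩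
    unfold Sshift
    split_ifs with h
    · rw [hR (t - a) (by linarith), zero_div]
    · rfl
  · refine ⟨(hkey x hx.1).1, lt_of_le_of_lt (hkey x hx.1).2 ?_⟩
    exact ENNReal.mul_lt_top ENNReal.ofReal_lt_top hx.2
  · intro t ht
    have h1 : a < t + a := by linarith
    have hwt : w t ≠ 0 := by
      intro h
      have := hwb t
      rw [h, abs_zero] at this
      linarith
    simp only [Sshift, if_pos h1, add_sub_cancel_right]
    field_simp
  · intro n
    rw [← hofReal n]
    exact (hiter n).2
  · have hC : eLpNorm x p (volume.restrict (Set.Ioi (0:ℝ))) ≠ ⊤ := hx.2.ne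
    have hlt1 : ENNReal.ofReal b⁻¹ < 1 := by
      rw [← ENNReal.ofReal_one]
      exact ENNReal.ofReal_lt_ofReal_iff_of_nonneg (by positivity) |>.mpr (inv_lt_one_of_one_lt₀ hb)
    have hupper : Tendsto (fun n : ℕ => (ENNReal.ofReal b⁻¹) ^ n *
        eLpNorm x p (volume.restrict (Set.Ioi (0:ℝ)))) atTop (nhds 0) := by
      have := ENNReal.Tendsto.mul_const
        (ENNReal.tendsto_pow_atTop_nhds_zero_of_lt_one hlt1) (Or.inr hC)
      simpa using this
    exact tendsto_of_tendsto_of_tendsto_of_le_of_le tendsto_const_nhds hupper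
      (fun n => zero_le) (fun n => (hiter n).2)
end
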